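/- arXiv:2310.18663 — 6 statements merged into one kernel-verified Lean document; each statement's English description precedes it below -/
import Mathlib

section
/- For every positive integer r there exists a constant C_r > 0, depending only on r, such that for all positive integers a₁, …, a_r one has E[Y_{a₁} ⋯ Y_{a_r}] ≤ C_r · σ(a₁) ⋯ σ(a_r), and consequently E[Y_{a₁} ⋯ Y_{a_r}] ≤ C_r · a₁² ⋯ a_r². -/
/-!
A Poisson variable of rate `ρ ≤ 1` has `r`-th moment at most `exp (2 ^ r - 1)`, because
`n ^ r ≤ (2 ^ r) ^ n` turns the moment series into an exponential series. Dividing `Y_{a_i}` by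
`σ(a_i)` makes it a convex combination of the `Z_d`, so by Jensen its `r`-th moment obeys the same
bound. Finally `∏ x_i ≤ ∑ x_i ^ r` for nonnegative `x_1, …, x_r` (compare each factor with the
largest), which gives `E[∏ Y_{a_i}] ≤ r exp (2 ^ r - 1) ∏ σ(a_i)`; and `σ(a) ≤ a ^ 2`.
-/

open MeasureTheory ProbabilityTheory Finset
open scoped NNReal

namespace ProbabilityTheory

variable {Ω : Type*} [MeasurableSpace Ω] {P : Measure Ω}

lemma poisson_weight_mul_pow_le (ρ : ℝ≥0) (r n : ℕ) :
    Real.exp (-ρ) * ρ ^ n / n.factorial * (n : ℝ) ^ r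
      ≤ Real.exp (-ρ) * (2 ^ r * ρ) ^ n / n.factorial := by
  have h : (n : ℝ) ^ r ≤ (2 ^ r) ^ n := by
    rw [← pow_mul, mul_comm, pow_mul]
    exact pow_le_pow_left₀ n.cast_nonneg (by exact_mod_cast n.lt_two_pow_self.le) r
  calc _ ≤ Real.exp (-ρ) * ρ ^ n / n.factorial * (2 ^ r) ^ n := by gcongr
    _ = _ := by ring

lemma hasSum_poisson_weight_two_pow (ρ : ℝ≥0) (r : ℕ) :
    HasSum (fun n : ℕ => Real.exp (-ρ) * (2 ^ r * ρ) ^ n / n.factorial)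
      (Real.exp ((2 ^ r - 1) * ρ)) := by
  rw [show ((2 : ℝ) ^ r - 1) * ρ = -ρ + 2 ^ r * ρ by ring, Real.exp_add]
  simpa only [Real.exp_eq_exp_ℝ, mul_div_assoc] using
    (NormedSpace.expSeries_div_hasSum_exp ((2 : ℝ) ^ r * ρ)).mul_left (Real.exp (-ρ))

lemma integrable_pow_poissonMeasure (ρ : ℝ≥0) (r : ℕ) :
    Integrable (fun n : ℕ => (n : ℝ) ^ r) (poissonMeasure ρ) :=
  integrable_poissonMeasure_iff.2 <| (hasSum_poisson_weight_two_pow ρ r).summable.of_nonneg_of_le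
    (fun n => by positivity) fun n => by simpa using poisson_weight_mul_pow_le ρ r n

lemma integral_pow_poissonMeasure_le (ρ : ℝ≥0) (r : ℕ) :
    ∫ n : ℕ, (n : ℝ) ^ r ∂poissonMeasure ρ ≤ Real.exp ((2 ^ r - 1) * ρ) := by
  rw [integral_poissonMeasure, ← (hasSum_poisson_weight_two_pow ρ r).tsum_eq]
  have hle := poisson_weight_mul_pow_le ρ r
  exact Summable.tsum_le_tsum hle
    ((hasSum_poisson_weight_two_pow ρ r).summable.of_nonneg_of_le (fun n => by positivity) hle)
    (hasSum_poisson_weight_two_pow ρ r).summable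

lemma hasLaw_poissonMeasure_of_measure_eq {X : Ω → ℕ} (hX : Measurable X) {ρ : ℝ≥0}
    (h : ∀ n, P {ω | X ω = n} = ENNReal.ofReal (Real.exp (-ρ) * ρ ^ n / n.factorial)) :
    HasLaw X (poissonMeasure ρ) P where
  aemeasurable := hX.aemeasurable
  map_eq := Measure.ext_of_singleton fun n => by
    rw [Measure.map_apply hX (measurableSet_singleton n), poissonMeasure_singleton]
    exact h n

lemma HasLaw.integrable_cast_pow_of_poisson {X : Ω → ℕ} {ρ : ℝ≥0}
    (hX : HasLaw X (poissonMeasure ρ) P) (r : ℕ) :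
    Integrable (fun ω => (X ω : ℝ) ^ r) P := by
  have h := integrable_pow_poissonMeasure ρ r
  rw [← hX.map_eq, integrable_map_measure .of_discrete hX.aemeasurable] at h
  exact h

lemma HasLaw.integral_cast_pow_le_of_poisson {X : Ω → ℕ} {ρ : ℝ≥0}
    (hX : HasLaw X (poissonMeasure ρ) P) (r : ℕ) :
    ∫ ω, (X ω : ℝ) ^ r ∂P ≤ Real.exp ((2 ^ r - 1) * ρ) :=
  (hX.integral_comp (f := fun n : ℕ => (n : ℝ) ^ r) .of_discrete).trans_le
    (integral_pow_poissonMeasure_le ρ r)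

end ProbabilityTheory

lemma prod_le_sum_pow_card {ι : Type*} [Fintype ι] [Nonempty ι] {x : ι → ℝ}
    (hx : ∀ i, 0 ≤ x i) : ∏ i, x i ≤ ∑ i, x i ^ Fintype.card ι := by
  obtain ⟨j, -, hj⟩ := exists_max_image univ x univ_nonempty
  calc ∏ i, x i ≤ ∏ _i : ι, x j := prod_le_prod (fun i _ => hx i) hj
    _ = x j ^ Fintype.card ι := by rw [prod_const, card_univ]
    _ ≤ ∑ i, x i ^ Fintype.card ι := single_le_sum (fun i _ => pow_nonneg (hx i) _) (mem_univ j)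

section Moments

variable {Ω α : Type*} [MeasurableSpace Ω] {P : Measure Ω} {X : α → Ω → ℝ} {n : ℕ} {M : ℝ}

lemma integrable_and_integral_pow_convex_comb_le {s : Finset α} {w : α → ℝ}
    (hw : ∀ d ∈ s, 0 ≤ w d) (hw1 : ∑ d ∈ s, w d = 1) (hX0 : ∀ d ∈ s, ∀ ω, 0 ≤ X d ω)
    (hXm : ∀ d, AEStronglyMeasurable (X d) P)
    (hXint : ∀ d ∈ s, Integrable (fun ω => X d ω ^ n) P) (hM : ∀ d ∈ s, ∫ ω, X d ω ^ n ∂P ≤ M) :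
    Integrable (fun ω => (∑ d ∈ s, w d * X d ω) ^ n) P ∧
      ∫ ω, (∑ d ∈ s, w d * X d ω) ^ n ∂P ≤ M := by
  have hjensen : ∀ ω, (∑ d ∈ s, w d * X d ω) ^ n ≤ ∑ d ∈ s, w d * X d ω ^ n := fun ω =>
    Real.pow_arith_mean_le_arith_mean_pow s _ _ hw hw1 (fun d hd => hX0 d hd ω) n
  have hdom : Integrable (fun ω => ∑ d ∈ s, w d * X d ω ^ n) P :=
    integrable_finsetSum _ fun d hd => (hXint d hd).const_mul _
  have hint : Integrable (fun ω => (∑ d ∈ s, w d * X d ω) ^ n) P := by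
    refine hdom.mono' (by fun_prop) (ae_of_all _ fun ω => ?_)
    have hnonneg : 0 ≤ ∑ d ∈ s, w d * X d ω :=
      sum_nonneg fun d hd => mul_nonneg (hw d hd) (hX0 d hd ω)
    rw [Real.norm_of_nonneg (pow_nonneg hnonneg n)]
    exact hjensen ω
  refine ⟨hint, ?_⟩
  calc ∫ ω, (∑ d ∈ s, w d * X d ω) ^ n ∂P ≤ ∫ ω, ∑ d ∈ s, w d * X d ω ^ n ∂P :=
        integral_mono hint hdom hjensen
    _ = ∑ d ∈ s, w d * ∫ ω, X d ω ^ n ∂P := by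
        rw [integral_finsetSum _ fun d hd => (hXint d hd).const_mul _]
        simp only [integral_const_mul]
    _ ≤ ∑ d ∈ s, w d * M := sum_le_sum fun d hd => mul_le_mul_of_nonneg_left (hM d hd) (hw d hd)
    _ = M := by rw [← sum_mul, hw1, one_mul]

lemma integral_prod_sum_mul_le {ι : Type*} [Fintype ι] [Nonempty ι] (s : ι → Finset α)
    {w : α → ℝ} (hw : ∀ d, 0 ≤ w d) (hW : ∀ i, 0 < ∑ d ∈ s i, w d) (hX0 : ∀ d ω, 0 ≤ X d ω)
    (hXm : ∀ d, AEStronglyMeasurable (X d) P)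
    (hXint : ∀ i, ∀ d ∈ s i, Integrable (fun ω => X d ω ^ Fintype.card ι) P)
    (hM : ∀ i, ∀ d ∈ s i, ∫ ω, X d ω ^ Fintype.card ι ∂P ≤ M) :
    ∫ ω, ∏ i, ∑ d ∈ s i, w d * X d ω ∂P ≤ Fintype.card ι * M * ∏ i, ∑ d ∈ s i, w d := by
  set W : ι → ℝ := fun i => ∑ d ∈ s i, w d
  set V : ι → Ω → ℝ := fun i ω => ∑ d ∈ s i, w d / W i * X d ω
  have hV : ∀ i, Integrable (fun ω => V i ω ^ Fintype.card ι) P ∧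
      ∫ ω, V i ω ^ Fintype.card ι ∂P ≤ M := fun i =>
    integrable_and_integral_pow_convex_comb_le (fun d _ => div_nonneg (hw d) (hW i).le)
      (by rw [← sum_div, div_self (hW i).ne']) (fun d _ => hX0 d) hXm (hXint i) (hM i)
  have hV0 : ∀ i ω, 0 ≤ V i ω := fun i ω =>
    sum_nonneg fun d _ => mul_nonneg (div_nonneg (hw d) (hW i).le) (hX0 d ω)
  have hscale : ∀ i ω, ∑ d ∈ s i, w d * X d ω = W i * V i ω := fun i ω => by
    rw [mul_sum]
    refine sum_congr rfl fun d _ => ?_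
    field_simp [show W i ≠ 0 from (hW i).ne']
  have hpt : ∀ ω, ∏ i, ∑ d ∈ s i, w d * X d ω ≤ (∏ i, W i) * ∑ i, V i ω ^ Fintype.card ι := by
    intro ω
    simp only [hscale, prod_mul_distrib]
    exact mul_le_mul_of_nonneg_left (prod_le_sum_pow_card (hV0 · ω))
      (prod_nonneg fun i _ => (hW i).le)
  calc ∫ ω, ∏ i, ∑ d ∈ s i, w d * X d ω ∂P
      ≤ ∫ ω, (∏ i, W i) * ∑ i, V i ω ^ Fintype.card ι ∂P :=
        integral_mono_of_nonneg (ae_of_all _ fun ω => prod_nonneg fun i _ =>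
            sum_nonneg fun d _ => mul_nonneg (hw d) (hX0 d ω))
          ((integrable_finsetSum _ fun i _ => (hV i).1).const_mul _) (ae_of_all _ hpt)
    _ = (∏ i, W i) * ∑ i, ∫ ω, V i ω ^ Fintype.card ι ∂P := by
        rw [integral_const_mul, integral_finsetSum _ fun i _ => (hV i).1]
    _ ≤ (∏ i, W i) * ∑ _i : ι, M := by
        gcongr with i
        · exact prod_nonneg fun i _ => (hW i).le
        · exact (hV i).2
    _ = Fintype.card ι * M * ∏ i, W i := by
        rw [sum_const, card_univ, nsmul_eq_mul]
        ring

end Moments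

lemma Nat.sum_divisors_le_sq (n : ℕ) : ∑ d ∈ n.divisors, d ≤ n ^ 2 :=
  calc ∑ d ∈ n.divisors, d ≤ #n.divisors • n := sum_le_card_nsmul _ _ _ fun _ => Nat.divisor_le
    _ ≤ n * n := Nat.mul_le_mul_right n n.card_divisors_le_self
    _ = n ^ 2 := (sq n).symm

theorem stmt2_general {Ω : Type*} [MeasurableSpace Ω] (P : Measure Ω)
    (Z : ℕ → Ω → ℕ)
    (hmeas : ∀ k, Measurable (Z k))
    (hpois : ∀ k : ℕ, 1 ≤ k → ∀ n : ℕ,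
      P {ω | Z k ω = n} =
        ENNReal.ofReal (Real.exp (-(1 / k)) * (1 / k : ℝ) ^ n / n.factorial))
    (r : ℕ) (hr : 0 < r) :
    ∃ C : ℝ, 0 < C ∧ ∀ a : Fin r → ℕ, (∀ i, 0 < a i) →
      (∫ ω, ∏ i, (∑ d ∈ (a i).divisors, (d : ℝ) * (Z d ω : ℝ)) ∂P
          ≤ C * ∏ i, (∑ d ∈ (a i).divisors, (d : ℝ))) ∧
      (∫ ω, ∏ i, (∑ d ∈ (a i).divisors, (d : ℝ) * (Z d ω : ℝ)) ∂P
          ≤ C * ∏ i, (a i : ℝ) ^ 2) := by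
  have : Nonempty (Fin r) := ⟨⟨0, hr⟩⟩
  have hlaw : ∀ d, 1 ≤ d → HasLaw (Z d) (poissonMeasure (d : ℝ≥0)⁻¹) P := fun d hd =>
    hasLaw_poissonMeasure_of_measure_eq (hmeas d) (by simpa using hpois d hd)
  have hmoment : ∀ d, 1 ≤ d → ∫ ω, (Z d ω : ℝ) ^ r ∂P ≤ Real.exp (2 ^ r - 1) := fun d hd => by
    refine ((hlaw d hd).integral_cast_pow_le_of_poisson r).trans (Real.exp_le_exp.2 ?_)
    exact mul_le_of_le_one_right (sub_nonneg.2 (one_le_pow₀ one_le_two))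
      (NNReal.coe_le_one.2 (inv_le_one_of_one_le₀ (Nat.one_le_cast.2 hd)))
  refine ⟨r * Real.exp (2 ^ r - 1), by positivity, fun a ha => ?_⟩
  have hbound := integral_prod_sum_mul_le (P := P) (fun i => (a i).divisors)
    (w := fun d => (d : ℝ)) (X := fun d ω => (Z d ω : ℝ)) (fun d => d.cast_nonneg)
    (fun i => sum_pos (fun d hd => Nat.cast_pos.2 (Nat.pos_of_mem_divisors hd))
      (Nat.nonempty_divisors.2 (ha i).ne'))
    (fun d ω => (Z d ω).cast_nonneg)
    (fun d => (Measurable.of_discrete.comp (hmeas d)).aestronglyMeasurable)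
    (fun i d hd => by
      simpa using (hlaw d (Nat.pos_of_mem_divisors hd)).integrable_cast_pow_of_poisson r)
    (fun i d hd => by simpa using hmoment d (Nat.pos_of_mem_divisors hd))
  rw [Fintype.card_fin] at hbound
  refine ⟨hbound, hbound.trans ?_⟩
  gcongr with i
  rw [← Nat.cast_sum]
  exact_mod_cast (a i).sum_divisors_le_sq

/-- Let `{Z k}` be mutually independent Poisson random variables with parameters `1/k`,
and `Y a = ∑_{d ∣ a} d • Z d`. For every positive integer `r` there is a constant
`C_r > 0` depending only on `r` such that for all positive integers `a 1, ..., a r`,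
`E[Y (a 1) ⋯ Y (a r)] ≤ C_r σ(a 1) ⋯ σ(a r)`, and consequently
`E[Y (a 1) ⋯ Y (a r)] ≤ C_r (a 1)² ⋯ (a r)²`. -/
theorem stmt2 {Ω : Type*} [MeasurableSpace Ω] (P : Measure Ω) [IsProbabilityMeasure P]
    (Z : ℕ → Ω → ℕ)
    (hmeas : ∀ k, Measurable (Z k))
    (hpois : ∀ k : ℕ, 1 ≤ k → ∀ n : ℕ,
      P {ω | Z k ω = n} =
        ENNReal.ofReal (Real.exp (-(1 / k)) * (1 / k : ℝ) ^ n / n.factorial))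
    (hindep : iIndepFun Z P)
    (r : ℕ) (hr : 0 < r) :
    ∃ C : ℝ, 0 < C ∧ ∀ a : Fin r → ℕ, (∀ i, 0 < a i) →
      (∫ ω, ∏ i, (∑ d ∈ (a i).divisors, (d : ℝ) * (Z d ω : ℝ)) ∂P
          ≤ C * ∏ i, (∑ d ∈ (a i).divisors, (d : ℝ))) ∧
      (∫ ω, ∏ i, (∑ d ∈ (a i).divisors, (d : ℝ) * (Z d ω : ℝ)) ∂P
          ≤ C * ∏ i, (a i : ℝ) ^ 2) :=
  stmt2_general P Z hmeas hpois r hr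
end

section
/- For every positive integer r there exists a constant C_r > 0, depending only on r, such that for all positive integers a₁, …, a_r one has |E[∏_{i=1}^r (Y_{a_i} − τ(a_i))]| ≤ C_r · a₁² ⋯ a_r². (Since E[Y_a] = τ(a), this is the bound |E[∏_{i=1}^r (Y_{a_i} − E[Y_{a_i}])]| ≤ C_r · a₁² ⋯ a_r² on centered joint moments.) -/
/-!
With `N = a₁ ⋯ a_r` and `S = ∑_{d ≤ N} Z_{1/d}`, every factor satisfies
`|Y_a - τ(a)| ≤ a (S + 1)`, and `(S + 1)^r ≤ r! 2^r 2^S` because `(S + 1)^r / r!` is at most the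
binomial coefficient `C(S + r, r)`. The Poisson generating function `E[c^Z] = e^{λ(c - 1)}` and
independence give `E[2^S] = e^{H_N} ≤ e N`, whence the bound with `C_r = r! 2^r e`.
-/

open MeasureTheory ProbabilityTheory Finset Real
open scoped NNReal ENNReal Nat

namespace ProbabilityTheory

lemma hasLaw_poissonMeasure_of_measure_eq_s3 {Ω : Type*} [MeasurableSpace Ω] {P : Measure Ω}
    {Z : Ω → ℕ} (hZ : Measurable Z) {r : ℝ≥0}
    (h : ∀ n : ℕ, P {ω | Z ω = n} = ENNReal.ofReal (exp (-r) * r ^ n / n !)) :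
    HasLaw Z Po(r) P where
  aemeasurable := hZ.aemeasurable
  map_eq := Measure.ext_of_singleton fun n => by
    rw [Measure.map_apply hZ (measurableSet_singleton n), poissonMeasure_singleton]
    exact h n

lemma lintegral_pow_poissonMeasure (r c : ℝ≥0) :
    ∫⁻ n, (c : ℝ≥0∞) ^ n ∂Po(r) = ENNReal.ofReal (exp (r * (c - 1))) := by
  have hsum : HasSum (fun n : ℕ => exp (-r) * ((c * r : ℝ) ^ n / n !)) (exp (r * (c - 1))) := by
    have h := (NormedSpace.expSeries_div_hasSum_exp (c * r : ℝ)).mul_left (exp (-r))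
    rw [← exp_eq_exp_ℝ, ← exp_add] at h
    rwa [show (r : ℝ) * (c - 1) = -r + c * r by ring]
  rw [poissonMeasure, lintegral_sum_measure, ← hsum.tsum_eq,
    ENNReal.ofReal_tsum_of_nonneg (fun n => by positivity) hsum.summable]
  refine tsum_congr fun n => ?_
  rw [lintegral_smul_measure, lintegral_dirac, smul_eq_mul, ← ENNReal.coe_pow,
    ← ENNReal.ofReal_coe_nnreal, ← ENNReal.ofReal_mul (by positivity), NNReal.coe_pow, mul_pow]
  ring_nf

lemma iIndepFun.lintegral_pow_sum_of_hasLaw_poissonMeasure {Ω ι : Type*} [MeasurableSpace Ω]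
    {P : Measure Ω} {Z : ι → Ω → ℕ} (hZ : ∀ i, Measurable (Z i)) (hindep : iIndepFun Z P)
    {s : Finset ι} {rate : ι → ℝ≥0} (hlaw : ∀ i ∈ s, HasLaw (Z i) Po(rate i) P) (c : ℝ≥0) :
    ∫⁻ ω, (c : ℝ≥0∞) ^ (∑ i ∈ s, Z i ω) ∂P
      = ENNReal.ofReal (exp ((c - 1) * ∑ i ∈ s, (rate i : ℝ))) := by
  simp_rw [← prod_pow_eq_pow_sum]
  rw [lintegral_prod_eq_prod_lintegral_of_indepFun s (fun i ω => (c : ℝ≥0∞) ^ Z i ω)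
      (hindep.comp _ fun _ => measurable_from_nat) fun i => measurable_from_nat.comp (hZ i),
    mul_sum, exp_sum, ENNReal.ofReal_prod_of_nonneg fun _ _ => (exp_pos _).le]
  refine prod_congr rfl fun i hi => ?_
  rw [(hlaw i hi).lintegral_comp measurable_from_nat.aemeasurable, lintegral_pow_poissonMeasure,
    mul_comm]

end ProbabilityTheory

lemma exp_sum_Icc_inv_le {n : ℕ} (hn : 0 < n) : exp (∑ d ∈ Icc 1 n, (d : ℝ)⁻¹) ≤ exp 1 * n := by
  have hharmonic : ∑ d ∈ Icc 1 n, (d : ℝ)⁻¹ = harmonic n := by simp [harmonic_eq_sum_Icc]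
  calc exp (∑ d ∈ Icc 1 n, (d : ℝ)⁻¹) ≤ exp (1 + log n) :=
        exp_le_exp.2 (hharmonic ▸ harmonic_le_one_add_log n)
    _ = exp 1 * n := by rw [exp_add, exp_log (by exact_mod_cast hn)]

lemma lintegral_two_pow_sum_Icc_le {Ω : Type*} [MeasurableSpace Ω] {P : Measure Ω}
    {Z : ℕ → Ω → ℕ} (hmeas : ∀ k, Measurable (Z k)) (hindep : iIndepFun Z P)
    (hpois : ∀ k : ℕ, 1 ≤ k → ∀ n : ℕ,
      P {ω | Z k ω = n} = ENNReal.ofReal (exp (-(1 / k)) * (1 / k : ℝ) ^ n / n !))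
    {N : ℕ} (hN : 0 < N) :
    ∫⁻ ω, 2 ^ (∑ d ∈ Icc 1 N, Z d ω) ∂P ≤ ENNReal.ofReal (exp 1 * N) := by
  have hlaw : ∀ d ∈ Icc 1 N, HasLaw (Z d) Po((d : ℝ≥0)⁻¹) P := fun d hd =>
    hasLaw_poissonMeasure_of_measure_eq_s3 (hmeas d) (by simpa using hpois d (mem_Icc.1 hd).1)
  rw [← ENNReal.coe_ofNat, hindep.lintegral_pow_sum_of_hasLaw_poissonMeasure hmeas hlaw 2]
  refine ENNReal.ofReal_le_ofReal ?_
  rw [show ((2 : ℝ≥0) : ℝ) - 1 = 1 by norm_num, one_mul]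
  simpa using exp_sum_Icc_inv_le hN

lemma abs_integral_le_of_ofReal_abs_le_mul {Ω : Type*} [MeasurableSpace Ω] {P : Measure Ω}
    {f : Ω → ℝ} {g : Ω → ℝ≥0∞} {K B : ℝ} (hK : 0 ≤ K) (hB : 0 ≤ B)
    (hfg : ∀ ω, ENNReal.ofReal |f ω| ≤ ENNReal.ofReal K * g ω)
    (hg : ∫⁻ ω, g ω ∂P ≤ ENNReal.ofReal B) :
    |∫ ω, f ω ∂P| ≤ K * B := by
  have hlintegral : ∫⁻ ω, ENNReal.ofReal |f ω| ∂P ≤ ENNReal.ofReal (K * B) :=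
    calc ∫⁻ ω, ENNReal.ofReal |f ω| ∂P ≤ ∫⁻ ω, ENNReal.ofReal K * g ω ∂P := lintegral_mono hfg
      _ = ENNReal.ofReal K * ∫⁻ ω, g ω ∂P := lintegral_const_mul' _ _ ENNReal.ofReal_ne_top
      _ ≤ ENNReal.ofReal (K * B) := by
          rw [ENNReal.ofReal_mul hK]
          gcongr
  calc |∫ ω, f ω ∂P| ≤ (∫⁻ ω, ENNReal.ofReal |f ω| ∂P).toReal := by
        simpa [Real.norm_eq_abs] using norm_integral_le_lintegral_norm f
    _ ≤ K * B := ENNReal.toReal_le_of_le_ofReal (by positivity) hlintegral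

lemma Nat.succ_pow_le_factorial_mul_two_pow (n r : ℕ) : (n + 1) ^ r ≤ r ! * 2 ^ (n + r) :=
  calc (n + 1) ^ r ≤ (n + 1).ascFactorial r := Nat.pow_succ_le_ascFactorial _ _
    _ = r ! * (n + r).choose r := Nat.ascFactorial_eq_factorial_mul_choose n r
    _ ≤ r ! * 2 ^ (n + r) := Nat.mul_le_mul_left _ (Nat.choose_le_two_pow _ _)

lemma abs_sum_divisors_mul_sub_card_le {x : ℕ → ℝ} (hx : ∀ d, 0 ≤ x d) {a : ℕ} {s : Finset ℕ}
    (hs : a.divisors ⊆ s) :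
    |∑ d ∈ a.divisors, (d : ℝ) * x d - #a.divisors| ≤ a * (∑ d ∈ s, x d + 1) := by
  have hsum : ∑ d ∈ a.divisors, (d : ℝ) * x d ≤ a * ∑ d ∈ s, x d :=
    calc ∑ d ∈ a.divisors, (d : ℝ) * x d ≤ ∑ d ∈ a.divisors, (a : ℝ) * x d :=
          sum_le_sum fun d hd =>
            mul_le_mul_of_nonneg_right (by exact_mod_cast Nat.divisor_le hd) (hx d)
      _ ≤ a * ∑ d ∈ s, x d := by
          rw [← mul_sum]
          exact mul_le_mul_of_nonneg_left (sum_le_sum_of_subset_of_nonneg hs fun d _ _ => hx d)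
            a.cast_nonneg
  have hcard : (#a.divisors : ℝ) ≤ a := by exact_mod_cast Nat.card_divisors_le_self a
  have hs_nonneg : 0 ≤ (a : ℝ) * ∑ d ∈ s, x d :=
    mul_nonneg a.cast_nonneg (sum_nonneg fun d _ => hx d)
  rw [mul_add_one]
  exact abs_sub_le_of_nonneg_of_le (sum_nonneg fun d _ => mul_nonneg d.cast_nonneg (hx d))
    (by linarith) (by positivity) (by linarith)

lemma abs_prod_sum_divisors_mul_sub_card_le {ι : Type*} [Fintype ι] (a : ι → ℕ) (x : ℕ → ℕ)
    {s : Finset ℕ} (hs : ∀ i, (a i).divisors ⊆ s) :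
    |∏ i, (∑ d ∈ (a i).divisors, (d : ℝ) * x d - #(a i).divisors)|
      ≤ (∏ i, (a i : ℝ)) * ((Fintype.card ι)! * 2 ^ Fintype.card ι * 2 ^ (∑ d ∈ s, x d)) := by
  set S := ∑ d ∈ s, x d
  calc |∏ i, (∑ d ∈ (a i).divisors, (d : ℝ) * x d - #(a i).divisors)|
      = ∏ i, |∑ d ∈ (a i).divisors, (d : ℝ) * x d - #(a i).divisors| := abs_prod _ _
    _ ≤ ∏ i, ((a i : ℝ) * (S + 1)) := prod_le_prod (fun _ _ => abs_nonneg _) fun i _ => by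
        simpa [S] using abs_sum_divisors_mul_sub_card_le (fun d => (x d).cast_nonneg) (hs i)
    _ = (∏ i, (a i : ℝ)) * ((S + 1) ^ Fintype.card ι : ℕ) := by
        rw [prod_mul_distrib, prod_const, card_univ]
        push_cast
        rfl
    _ ≤ (∏ i, (a i : ℝ)) * ((Fintype.card ι)! * 2 ^ Fintype.card ι * 2 ^ S) := by
        gcongr
        rw [mul_assoc, ← pow_add, add_comm (Fintype.card ι)]
        exact_mod_cast Nat.succ_pow_le_factorial_mul_two_pow S _

theorem stmt3_general {Ω : Type*} [MeasurableSpace Ω] (P : Measure Ω) [IsProbabilityMeasure P]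
    (Z : ℕ → Ω → ℕ)
    (hmeas : ∀ k, Measurable (Z k))
    (hpois : ∀ k : ℕ, 1 ≤ k → ∀ n : ℕ,
      P {ω | Z k ω = n} =
        ENNReal.ofReal (Real.exp (-(1 / k)) * (1 / k : ℝ) ^ n / n.factorial))
    (hindep : iIndepFun Z P)
    (r : ℕ) :
    ∃ C : ℝ, 0 < C ∧ ∀ a : Fin r → ℕ, (∀ i, 0 < a i) →
      |∫ ω, ∏ i, ((∑ d ∈ (a i).divisors, (d : ℝ) * (Z d ω : ℝ)) -
          ((a i).divisors.card : ℝ)) ∂P|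
        ≤ C * ∏ i, (a i : ℝ) ^ 2 := by
  refine ⟨r ! * 2 ^ r * exp 1, by positivity, fun a ha => ?_⟩
  set N := ∏ i, a i
  have hN : 0 < N := prod_pos fun i _ => ha i
  have hdiv : ∀ i, (a i).divisors ⊆ Icc 1 N := fun i d hd =>
    mem_Icc.2 ⟨Nat.pos_of_mem_divisors hd,
      Nat.le_of_dvd hN ((Nat.dvd_of_mem_divisors hd).trans (dvd_prod_of_mem _ (mem_univ i)))⟩
  have hbound : ∀ ω, ENNReal.ofReal
      |∏ i, ((∑ d ∈ (a i).divisors, (d : ℝ) * (Z d ω : ℝ)) - ((a i).divisors.card : ℝ))|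
      ≤ ENNReal.ofReal ((∏ i, (a i : ℝ)) * (r ! * 2 ^ r)) * 2 ^ (∑ d ∈ Icc 1 N, Z d ω) := by
    intro ω
    have h := abs_prod_sum_divisors_mul_sub_card_le a (fun d => Z d ω) hdiv
    rw [Fintype.card_fin, ← mul_assoc] at h
    rw [← ENNReal.ofReal_ofNat 2, ← ENNReal.ofReal_pow zero_le_two,
      ← ENNReal.ofReal_mul (by positivity)]
    exact ENNReal.ofReal_le_ofReal h
  calc _ ≤ (∏ i, (a i : ℝ)) * (r ! * 2 ^ r) * (exp 1 * N) :=
        abs_integral_le_of_ofReal_abs_le_mul (by positivity) (by positivity) hbound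
          (lintegral_two_pow_sum_Icc_le hmeas hindep hpois hN)
    _ = r ! * 2 ^ r * exp 1 * ∏ i, (a i : ℝ) ^ 2 := by
        simp only [N, Nat.cast_prod, prod_pow]
        ring

/-- Let `{Z k}` be mutually independent Poisson random variables with parameters `1/k`,
and `Y a = ∑_{d ∣ a} d • Z d`. For every positive integer `r` there is a constant
`C_r > 0` depending only on `r` such that for all positive integers `a 1, ..., a r`,
`|E[∏ i, (Y (a i) − τ(a i))]| ≤ C_r (a 1)² ⋯ (a r)²`, where `τ(a)` is the number of
divisors of `a`. -/
theorem stmt3 {Ω : Type*} [MeasurableSpace Ω] (P : Measure Ω) [IsProbabilityMeasure P]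
    (Z : ℕ → Ω → ℕ)
    (hmeas : ∀ k, Measurable (Z k))
    (hpois : ∀ k : ℕ, 1 ≤ k → ∀ n : ℕ,
      P {ω | Z k ω = n} =
        ENNReal.ofReal (Real.exp (-(1 / k)) * (1 / k : ℝ) ^ n / n.factorial))
    (hindep : iIndepFun Z P)
    (r : ℕ) (hr : 0 < r) :
    ∃ C : ℝ, 0 < C ∧ ∀ a : Fin r → ℕ, (∀ i, 0 < a i) →
      |∫ ω, ∏ i, ((∑ d ∈ (a i).divisors, (d : ℝ) * (Z d ω : ℝ)) -
          ((a i).divisors.card : ℝ)) ∂P|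
        ≤ C * ∏ i, (a i : ℝ) ^ 2 :=
  stmt3_general P Z hmeas hpois hindep r
end

section
/- There is an absolute constant C > 0 such that for all positive integers a and b one has E[(Y_a − τ(a))² (Y_b − τ(b))²] ≤ C (σ₃(gcd(a, b)) + σ(a) σ(b)), where σ₃(n) = ∑_{d ∣ n} d³; in particular E[(Y_a − τ(a))² (Y_b − τ(b))²] ≤ C′ a² b² for an absolute constant C′ > 0. -/
/-!
Put `X d = d Z_d - 1`. Then `Y_a - τ(a) = ∑_{d ∣ a} X d`, the `X d` are independent and centred,
`E[X_d²] = d` and `E[X_d⁴] = d³ + 3d²`: these are the central moments `λ` and `λ + 3λ²` of a Poisson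
variable of rate `λ = 1/d`, read off from its factorial moments `E[Z (Z - 1) ⋯ (Z - j + 1)] = λʲ`.

Splitting the divisors of `a` and of `b` into those of `g = gcd(a, b)` and the others writes the two
sums as `U + W` and `V + W` with `U`, `V`, `W` independent and `U`, `V` centred. In the expansion of
`(U + W)²(V + W)²` every monomial containing `U` or `V` to the first power has mean zero, so the
expectation is `E[U²]E[V²] + E[U²]E[W²] + E[V²]E[W²] + E[W⁴]`, where `E[W⁴] = σ₃(g) + 3σ(g)²`.
This is at most `σ₃(g) + 3σ(a)σ(b)`, and `σ₃(g) ≤ g⁴ ≤ a²b²`, `σ(a) ≤ a²`.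
-/

open MeasureTheory ProbabilityTheory Finset
open scoped NNReal Nat

lemma Nat.divisors_inter_divisors {a b : ℕ} (ha : a ≠ 0) (hb : b ≠ 0) :
    a.divisors ∩ b.divisors = (a.gcd b).divisors := by
  ext d
  simp [Nat.dvd_gcd_iff, ha, hb]

lemma Nat.sum_divisors_pow_le (n k : ℕ) : ∑ d ∈ n.divisors, (d : ℝ) ^ k ≤ (n : ℝ) ^ (k + 1) := by
  have h : ∑ d ∈ n.divisors, d ^ k ≤ n ^ (k + 1) :=
    calc ∑ d ∈ n.divisors, d ^ k ≤ n.divisors.card • n ^ k :=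
          sum_le_card_nsmul _ _ _ fun d hd ↦ Nat.pow_le_pow_left (Nat.divisor_le hd) k
      _ ≤ n * n ^ k := Nat.mul_le_mul_right _ (Nat.card_divisors_le_self n)
      _ = n ^ (k + 1) := by ring
  exact_mod_cast h

lemma Nat.sum_divisors_gcd_pow_three_add_le {a b : ℕ} (ha : 0 < a) (hb : 0 < b) :
    ∑ d ∈ (a.gcd b).divisors, (d : ℝ) ^ 3
        + 3 * (∑ d ∈ a.divisors, (d : ℝ)) * ∑ d ∈ b.divisors, (d : ℝ)
      ≤ 4 * (a ^ 2 * b ^ 2) := by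
  have hga : (a.gcd b : ℝ) ≤ a := by exact_mod_cast Nat.le_of_dvd ha (Nat.gcd_dvd_left a b)
  have hgb : (a.gcd b : ℝ) ≤ b := by exact_mod_cast Nat.le_of_dvd hb (Nat.gcd_dvd_right a b)
  have hσ₃ : ∑ d ∈ (a.gcd b).divisors, (d : ℝ) ^ 3 ≤ a ^ 2 * b ^ 2 :=
    calc _ ≤ (a.gcd b : ℝ) ^ 2 * (a.gcd b : ℝ) ^ 2 := by
          simpa [← pow_add] using Nat.sum_divisors_pow_le (a.gcd b) 3
      _ ≤ a ^ 2 * b ^ 2 := by gcongr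
  have hσ (n : ℕ) : ∑ d ∈ n.divisors, (d : ℝ) ≤ (n : ℝ) ^ 2 := by
    simpa using Nat.sum_divisors_pow_le n 1
  have hσσ : (∑ d ∈ a.divisors, (d : ℝ)) * ∑ d ∈ b.divisors, (d : ℝ) ≤ a ^ 2 * b ^ 2 :=
    mul_le_mul (hσ a) (hσ b) (by positivity) (by positivity)
  linarith

namespace ProbabilityTheory

open Real

section PoissonWeights

variable (r : ℝ≥0)

lemma poissonWeight_add_mul_descFactorial (n j : ℕ) :
    exp (-r) * r ^ (n + j) / (n + j)! * (n + j).descFactorial j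
      = r ^ j * (exp (-r) * r ^ n / n !) := by
  have h := Nat.factorial_mul_descFactorial (Nat.le_add_left j n)
  rw [Nat.add_sub_cancel] at h
  have h' : ((n + j)! : ℝ) = n ! * (n + j).descFactorial j := by exact_mod_cast h.symm
  rw [h', pow_add]
  field_simp

lemma hasSum_poissonWeight_mul_descFactorial (j : ℕ) :
    HasSum (fun n ↦ exp (-r) * r ^ n / n ! * n.descFactorial j) ((r : ℝ) ^ j) := by
  rw [← hasSum_nat_add_iff' j]
  have hzero : ∑ n ∈ range j, exp (-r) * r ^ n / n ! * (n.descFactorial j : ℝ) = 0 :=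
    sum_eq_zero fun n hn ↦ by simp [Nat.descFactorial_eq_zero_iff_lt.2 (mem_range.1 hn)]
  simp only [poissonWeight_add_mul_descFactorial, hzero, sub_zero]
  simpa using (hasSum_one_poissonMeasure r).mul_left ((r : ℝ) ^ j)

lemma hasSum_poissonWeight_mul_sub :
    HasSum (fun n ↦ exp (-r) * r ^ n / n ! * ((n : ℝ) - r)) 0 := by
  have h := hasSum_poissonWeight_mul_descFactorial r
  convert (h 1).add ((h 0).mul_left (-r : ℝ)) using 1
  · ext n
    simp
    ring
  · simp

lemma hasSum_poissonWeight_mul_sub_sq :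
    HasSum (fun n ↦ exp (-r) * r ^ n / n ! * ((n : ℝ) - r) ^ 2) r := by
  have h := hasSum_poissonWeight_mul_descFactorial r
  set x : ℝ := (r : ℝ)
  convert ((h 2).add ((h 1).mul_left (1 - 2 * x))).add ((h 0).mul_left (x ^ 2)) using 1
  · ext n
    simp only [← descPochhammer_eval_eq_descFactorial ℝ]
    simp [descPochhammer_succ_right]
    ring
  · ring

lemma hasSum_poissonWeight_mul_sub_pow_four :
    HasSum (fun n ↦ exp (-r) * r ^ n / n ! * ((n : ℝ) - r) ^ 4) (r + 3 * r ^ 2) := by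
  have h := hasSum_poissonWeight_mul_descFactorial r
  set x : ℝ := (r : ℝ)
  -- `(n - x)⁴` in the basis of falling factorials `n.descFactorial j`
  convert (((((h 4).add ((h 3).mul_left (6 - 4 * x))).add
    ((h 2).mul_left (7 - 12 * x + 6 * x ^ 2))).add
    ((h 1).mul_left (1 - 4 * x + 6 * x ^ 2 - 4 * x ^ 3))).add ((h 0).mul_left (x ^ 4))) using 1
  · ext n
    simp only [← descPochhammer_eval_eq_descFactorial ℝ]
    simp [descPochhammer_succ_right]
    ring
  · ring

lemma memLp_sub_poissonMeasure : MemLp (fun n : ℕ ↦ (n : ℝ) - r) 4 Po(r) := by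
  refine (integrable_norm_rpow_iff .of_discrete (by norm_num) (by norm_num)).1
    (integrable_poissonMeasure_iff.2 ?_)
  refine (hasSum_poissonWeight_mul_sub_pow_four r).summable.congr fun n ↦ ?_
  simp [Even.pow_abs ⟨2, rfl⟩]

end PoissonWeights

section PoissonMoments

variable {Ω : Type*} [MeasurableSpace Ω] {P : Measure Ω}

lemma hasLaw_of_measure_eq {α : Type*} [MeasurableSpace α] [Countable α]
    [MeasurableSingletonClass α] {μ : Measure α} {N : Ω → α} (hN : Measurable N)
    (h : ∀ a, P {ω | N ω = a} = μ {a}) : HasLaw N μ P :=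
  ⟨hN.aemeasurable, Measure.ext_iff_singleton.2 fun a ↦ by
    rw [Measure.map_apply hN (measurableSet_singleton a)]; exact h a⟩

lemma HasLaw.integral_eq_of_hasSum_poissonWeight {N : Ω → ℕ} {r : ℝ≥0} (hN : HasLaw N Po(r) P)
    {f : ℕ → ℝ} {a : ℝ} (h : HasSum (fun n ↦ exp (-r) * r ^ n / n ! * f n) a) :
    ∫ ω, f (N ω) ∂P = a :=
  (hN.integral_comp (f := f) .of_discrete).trans ((integral_poissonMeasure r f).trans h.tsum_eq)

lemma HasLaw.memLp_sub_poissonMeasure {N : Ω → ℕ} {r : ℝ≥0} (hN : HasLaw N Po(r) P) :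
    MemLp (fun ω ↦ (N ω : ℝ) - r) 4 P := by
  have h := ProbabilityTheory.memLp_sub_poissonMeasure r
  rw [← hN.map_eq] at h
  exact (memLp_map_measure_iff .of_discrete hN.aemeasurable).1 h

lemma HasLaw.moments_natCast_mul_sub_one {N : Ω → ℕ} {d : ℕ} (hd : d ≠ 0)
    (hN : HasLaw N Po((d : ℝ≥0)⁻¹) P) :
    MemLp (fun ω ↦ (d : ℝ) * N ω - 1) 4 P ∧ ∫ ω, ((d : ℝ) * N ω - 1) ∂P = 0 ∧
      ∫ ω, ((d : ℝ) * N ω - 1) ^ 2 ∂P = (d : ℝ) ∧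
      ∫ ω, ((d : ℝ) * N ω - 1) ^ 4 ∂P = (d : ℝ) ^ 3 + 3 * (d : ℝ) ^ 2 := by
  have hscale (ω : Ω) : (d : ℝ) * N ω - 1 = d * ((N ω : ℝ) - ((d : ℝ≥0)⁻¹ : ℝ≥0)) := by
    push_cast
    field_simp
  simp only [hscale, mul_pow, integral_const_mul,
    hN.integral_eq_of_hasSum_poissonWeight (hasSum_poissonWeight_mul_sub _),
    hN.integral_eq_of_hasSum_poissonWeight (hasSum_poissonWeight_mul_sub_sq _),
    hN.integral_eq_of_hasSum_poissonWeight (hasSum_poissonWeight_mul_sub_pow_four _)]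
  refine ⟨hN.memLp_sub_poissonMeasure.const_mul _, by simp, ?_, ?_⟩ <;> push_cast <;> field_simp

end PoissonMoments

section IndependentMoments

variable {Ω : Type*} [MeasurableSpace Ω] {P : Measure Ω} {U V W : Ω → ℝ}

lemma _root_.MeasureTheory.MemLp.integrable_pow_of_le [IsFiniteMeasure P] {X : Ω → ℝ} {p k : ℕ}
    (hX : MemLp X p P) (hk : k ≤ p) : Integrable (fun ω ↦ X ω ^ k) P :=
  ((hX.mono_exponent (by exact_mod_cast hk)).integrable_norm_pow').mono'
    (hX.aestronglyMeasurable.pow k) (ae_of_all _ fun ω ↦ by simp [norm_pow])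

lemma IndepFun.integral_add_pow [IsFiniteMeasure P] {n : ℕ} (hUV : IndepFun U V P)
    (hU : MemLp U n P) (hV : MemLp V n P) :
    ∫ ω, (U ω + V ω) ^ n ∂P
      = ∑ m ∈ range (n + 1), (∫ ω, U ω ^ m ∂P) * (∫ ω, V ω ^ (n - m) ∂P) * n.choose m := by
  have hpow (m : ℕ) : IndepFun (fun ω ↦ U ω ^ m) (fun ω ↦ V ω ^ (n - m)) P :=
    hUV.comp (measurable_id.pow_const m) (measurable_id.pow_const (n - m))
  simp_rw [add_pow]
  rw [integral_finsetSum]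
  · refine sum_congr rfl fun m _ ↦ ?_
    rw [integral_mul_const, (hpow m).integral_fun_mul_eq_mul_integral
      (hU.aestronglyMeasurable.pow m) (hV.aestronglyMeasurable.pow _)]
  · intro m hm
    exact ((hpow m).integrable_mul (hU.integrable_pow_of_le (mem_range_succ_iff.1 hm))
      (hV.integrable_pow_of_le (Nat.sub_le n m))).mul_const _

variable [IsProbabilityMeasure P]

lemma IndepFun.integral_add_sq (hUV : IndepFun U V P) (hU : MemLp U 2 P) (hV : MemLp V 2 P)
    (hU0 : ∫ ω, U ω ∂P = 0) :
    ∫ ω, (U ω + V ω) ^ 2 ∂P = ∫ ω, U ω ^ 2 ∂P + ∫ ω, V ω ^ 2 ∂P := by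
  simp [hUV.integral_add_pow hU hV, sum_range_succ, hU0, add_comm]

lemma IndepFun.integral_add_pow_four (hUV : IndepFun U V P) (hU : MemLp U 4 P) (hV : MemLp V 4 P)
    (hU0 : ∫ ω, U ω ∂P = 0) (hV0 : ∫ ω, V ω ∂P = 0) :
    ∫ ω, (U ω + V ω) ^ 4 ∂P
      = ∫ ω, U ω ^ 4 ∂P + 6 * (∫ ω, U ω ^ 2 ∂P) * ∫ ω, V ω ^ 2 ∂P + ∫ ω, V ω ^ 4 ∂P := by
  simp [hUV.integral_add_pow hU hV, sum_range_succ, hU0, hV0, Nat.choose]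
  ring

lemma IndepFun.integral_add_sq_mul_add_sq (hU : IndepFun U (fun ω ↦ (V ω, W ω)) P)
    (hVW : IndepFun V W P) (hU2 : MemLp U 2 P) (hV2 : MemLp V 2 P) (hW4 : MemLp W 4 P)
    (hU0 : ∫ ω, U ω ∂P = 0) (hV0 : ∫ ω, V ω ∂P = 0) :
    ∫ ω, (U ω + W ω) ^ 2 * (V ω + W ω) ^ 2 ∂P
      = (∫ ω, U ω ^ 2 ∂P) * (∫ ω, V ω ^ 2 ∂P) + (∫ ω, U ω ^ 2 ∂P) * (∫ ω, W ω ^ 2 ∂P)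
        + (∫ ω, V ω ^ 2 ∂P) * (∫ ω, W ω ^ 2 ∂P) + ∫ ω, W ω ^ 4 ∂P := by
  have hmono (i j k : ℕ) (hi : i ≤ 2) (hj : j ≤ 2) (hk : k ≤ 4) :
      Integrable (fun ω ↦ U ω ^ i * (V ω ^ j * W ω ^ k)) P ∧
      ∫ ω, U ω ^ i * (V ω ^ j * W ω ^ k) ∂P
        = (∫ ω, U ω ^ i ∂P) * ((∫ ω, V ω ^ j ∂P) * ∫ ω, W ω ^ k ∂P) := by
    have hVW' : IndepFun (fun ω ↦ V ω ^ j) (fun ω ↦ W ω ^ k) P :=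
      hVW.comp (measurable_id.pow_const j) (measurable_id.pow_const k)
    have hU' : IndepFun (fun ω ↦ U ω ^ i) (fun ω ↦ V ω ^ j * W ω ^ k) P :=
      hU.comp (measurable_id.pow_const i)
        ((measurable_fst.pow_const j).mul (measurable_snd.pow_const k))
    refine ⟨hU'.integrable_mul (hU2.integrable_pow_of_le hi)
      (hVW'.integrable_mul (hV2.integrable_pow_of_le hj) (hW4.integrable_pow_of_le hk)), ?_⟩
    rw [hU'.integral_fun_mul_eq_mul_integral (hU2.aestronglyMeasurable.pow i)
      ((hV2.aestronglyMeasurable.pow j).mul (hW4.aestronglyMeasurable.pow k)),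
      hVW'.integral_fun_mul_eq_mul_integral (hV2.aestronglyMeasurable.pow j)
      (hW4.aestronglyMeasurable.pow k)]
  have hexpand (ω : Ω) : (U ω + W ω) ^ 2 * (V ω + W ω) ^ 2 = ∑ m ∈ range 3, ∑ l ∈ range 3,
      (2 : ℕ).choose m * (2 : ℕ).choose l * (U ω ^ m * (V ω ^ l * W ω ^ ((2 - m) + (2 - l)))) := by
    simp_rw [add_pow, sum_mul_sum, pow_add]
    refine sum_congr rfl fun m _ ↦ sum_congr rfl fun l _ ↦ by ring
  have hterm (m l : ℕ) (hm : m ∈ range 3) (hl : l ∈ range 3) :=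
    hmono m l (2 - m + (2 - l)) (mem_range_succ_iff.1 hm) (mem_range_succ_iff.1 hl) (by omega)
  simp_rw [hexpand]
  rw [integral_finsetSum _ fun m hm ↦ integrable_finsetSum _ fun l hl ↦
      (hterm m l hm hl).1.const_mul _,
    sum_congr rfl fun m hm ↦ (integral_finsetSum _ fun l hl ↦ (hterm m l hm hl).1.const_mul _).trans
      (sum_congr rfl fun l hl ↦ by rw [integral_const_mul, (hterm m l hm hl).2])]
  simp [sum_range_succ, hU0, hV0]
  ring

end IndependentMoments

section FinsetSums

variable {Ω : Type*} [MeasurableSpace Ω] {P : Measure Ω} {ι : Type*} {X : ι → Ω → ℝ}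

lemma iIndepFun.indepFun_fun_finsetSum_of_notMem (hX : iIndepFun X P)
    (hmeas : ∀ i, Measurable (X i)) {s : Finset ι} {i : ι} (hi : i ∉ s) :
    IndepFun (X i) (fun ω ↦ ∑ j ∈ s, X j ω) P := by
  simpa [Finset.sum_fn] using (hX.indepFun_finsetSum_of_notMem hmeas hi).symm

lemma integral_finset_sum_eq_zero {s : Finset ι} (hI : ∀ i ∈ s, Integrable (X i) P)
    (h0 : ∀ i ∈ s, ∫ ω, X i ω ∂P = 0) : ∫ ω, ∑ i ∈ s, X i ω ∂P = 0 :=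
  (integral_finsetSum s hI).trans (sum_eq_zero h0)

variable [IsProbabilityMeasure P] [DecidableEq ι]

lemma iIndepFun.integral_finset_sum_sq (hX : iIndepFun X P) (hmeas : ∀ i, Measurable (X i))
    {s : Finset ι} (hL : ∀ i ∈ s, MemLp (X i) 2 P) (h0 : ∀ i ∈ s, ∫ ω, X i ω ∂P = 0) :
    ∫ ω, (∑ i ∈ s, X i ω) ^ 2 ∂P = ∑ i ∈ s, ∫ ω, X i ω ^ 2 ∂P := by
  induction s using Finset.induction_on with
  | empty => simp
  | insert i s hi ih =>
    simp only [sum_insert hi]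
    rw [(hX.indepFun_fun_finsetSum_of_notMem hmeas hi).integral_add_sq (hL i (mem_insert_self i s))
      (memLp_finsetSum s fun j hj ↦ hL j (mem_insert_of_mem hj)) (h0 i (mem_insert_self i s)),
      ih (fun j hj ↦ hL j (mem_insert_of_mem hj)) (fun j hj ↦ h0 j (mem_insert_of_mem hj))]

lemma iIndepFun.integral_finset_sum_pow_four (hX : iIndepFun X P) (hmeas : ∀ i, Measurable (X i))
    {s : Finset ι} (hL : ∀ i ∈ s, MemLp (X i) 4 P) (h0 : ∀ i ∈ s, ∫ ω, X i ω ∂P = 0) :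
    ∫ ω, (∑ i ∈ s, X i ω) ^ 4 ∂P
      = ∑ i ∈ s, (∫ ω, X i ω ^ 4 ∂P - 3 * (∫ ω, X i ω ^ 2 ∂P) ^ 2)
        + 3 * (∑ i ∈ s, ∫ ω, X i ω ^ 2 ∂P) ^ 2 := by
  induction s using Finset.induction_on with
  | empty => simp
  | insert i s hi ih =>
    have hLs : ∀ j ∈ s, MemLp (X j) 4 P := fun j hj ↦ hL j (mem_insert_of_mem hj)
    have h0s : ∀ j ∈ s, ∫ ω, X j ω ∂P = 0 := fun j hj ↦ h0 j (mem_insert_of_mem hj)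
    simp only [sum_insert hi]
    rw [(hX.indepFun_fun_finsetSum_of_notMem hmeas hi).integral_add_pow_four
      (hL i (mem_insert_self i s)) (memLp_finsetSum s hLs) (h0 i (mem_insert_self i s))
      (integral_finset_sum_eq_zero (fun j hj ↦ (hLs j hj).integrable (by norm_num)) h0s),
      ih hLs h0s,
      hX.integral_finset_sum_sq hmeas (fun j hj ↦ (hLs j hj).mono_exponent (by norm_num)) h0s]
    ring

end FinsetSums

section BlockIndependence

variable {Ω ι : Type*}

lemma measurable_biSup_comap_finset_sum {X : ι → Ω → ℝ} {S : Set ι} {s : Finset ι}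
    (hs : ↑s ⊆ S) :
    Measurable[⨆ i ∈ S, MeasurableSpace.comap (X i) inferInstance] fun ω ↦ ∑ i ∈ s, X i ω :=
  Finset.measurable_sum s fun i hi ↦ Measurable.of_comap_le
    (le_iSup₂ (f := fun j (_ : j ∈ S) ↦ MeasurableSpace.comap (X j) inferInstance) i (hs hi))

variable [MeasurableSpace Ω] {P : Measure Ω}

lemma iIndepFun.indepFun_of_measurable_biSup {κ β γ : Type*} [MeasurableSpace κ]
    [MeasurableSpace β] [MeasurableSpace γ] {X : ι → Ω → κ} (hX : iIndepFun X P)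
    (hmeas : ∀ i, Measurable (X i)) {S T : Set ι} (hST : Disjoint S T) {f : Ω → β} {g : Ω → γ}
    (hf : Measurable[⨆ i ∈ S, MeasurableSpace.comap (X i) inferInstance] f)
    (hg : Measurable[⨆ i ∈ T, MeasurableSpace.comap (X i) inferInstance] g) :
    IndepFun f g P :=
  indep_of_indep_of_le_right (indep_of_indep_of_le_left
    (indep_iSup_of_disjoint (fun i ↦ (hmeas i).comap_le) hX.iIndep hST) hf.comap_le) hg.comap_le

variable [IsProbabilityMeasure P] [DecidableEq ι] {X : ι → Ω → ℝ}

theorem iIndepFun.integral_finset_sum_sq_mul_finset_sum_sq (hX : iIndepFun X P)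
    (hmeas : ∀ i, Measurable (X i)) {s t : Finset ι} (hL : ∀ i ∈ s ∪ t, MemLp (X i) 4 P)
    (h0 : ∀ i ∈ s ∪ t, ∫ ω, X i ω ∂P = 0) :
    ∫ ω, (∑ i ∈ s, X i ω) ^ 2 * (∑ i ∈ t, X i ω) ^ 2 ∂P
      = (∑ i ∈ s \ t, ∫ ω, X i ω ^ 2 ∂P) * (∑ i ∈ t \ s, ∫ ω, X i ω ^ 2 ∂P)
        + (∑ i ∈ s \ t, ∫ ω, X i ω ^ 2 ∂P) * (∑ i ∈ s ∩ t, ∫ ω, X i ω ^ 2 ∂P)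
        + (∑ i ∈ t \ s, ∫ ω, X i ω ^ 2 ∂P) * (∑ i ∈ s ∩ t, ∫ ω, X i ω ^ 2 ∂P)
        + ∫ ω, (∑ i ∈ s ∩ t, X i ω) ^ 4 ∂P := by
  have hst : s \ t ⊆ s ∪ t := sdiff_subset.trans subset_union_left
  have hts : t \ s ⊆ s ∪ t := sdiff_subset.trans subset_union_right
  have hint : s ∩ t ⊆ s ∪ t := inter_subset_left.trans subset_union_left
  have hL2 {u : Finset ι} (hu : u ⊆ s ∪ t) : ∀ i ∈ u, MemLp (X i) 2 P :=
    fun i hi ↦ (hL i (hu hi)).mono_exponent (by norm_num)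
  have hsum_memLp {u : Finset ι} (hu : u ⊆ s ∪ t) : MemLp (fun ω ↦ ∑ i ∈ u, X i ω) 4 P :=
    memLp_finsetSum u fun i hi ↦ hL i (hu hi)
  have hsum_zero {u : Finset ι} (hu : u ⊆ s ∪ t) : ∫ ω, ∑ i ∈ u, X i ω ∂P = 0 :=
    integral_finset_sum_eq_zero (fun i hi ↦ (hL i (hu hi)).integrable (by norm_num))
      fun i hi ↦ h0 i (hu hi)
  have hU : IndepFun (fun ω ↦ ∑ i ∈ s \ t, X i ω)
      (fun ω ↦ (∑ i ∈ t \ s, X i ω, ∑ i ∈ s ∩ t, X i ω)) P :=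
    hX.indepFun_of_measurable_biSup hmeas (S := ↑(s \ t)) (T := ↑(t \ s ∪ s ∩ t))
      (disjoint_coe.2 (disjoint_left.2 fun i ↦ by simp; tauto))
      (measurable_biSup_comap_finset_sum subset_rfl)
      ((measurable_biSup_comap_finset_sum (by simp)).prodMk
        (measurable_biSup_comap_finset_sum (by simp)))
  have hVW : IndepFun (fun ω ↦ ∑ i ∈ t \ s, X i ω) (fun ω ↦ ∑ i ∈ s ∩ t, X i ω) P :=
    hX.indepFun_of_measurable_biSup hmeas (S := ↑(t \ s)) (T := ↑(s ∩ t))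
      (disjoint_coe.2 (disjoint_left.2 fun i ↦ by simp; tauto))
      (measurable_biSup_comap_finset_sum subset_rfl) (measurable_biSup_comap_finset_sum subset_rfl)
  have hsplit_s (ω : Ω) : ∑ i ∈ s, X i ω = ∑ i ∈ s \ t, X i ω + ∑ i ∈ s ∩ t, X i ω := by
    rw [add_comm, sum_inter_add_sum_sdiff]
  have hsplit_t (ω : Ω) : ∑ i ∈ t, X i ω = ∑ i ∈ t \ s, X i ω + ∑ i ∈ s ∩ t, X i ω := by
    rw [add_comm, inter_comm, sum_inter_add_sum_sdiff]
  simp_rw [hsplit_s, hsplit_t]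
  rw [hU.integral_add_sq_mul_add_sq hVW ((hsum_memLp hst).mono_exponent (by norm_num))
      ((hsum_memLp hts).mono_exponent (by norm_num)) (hsum_memLp hint) (hsum_zero hst)
      (hsum_zero hts),
    hX.integral_finset_sum_sq hmeas (hL2 hst) fun i hi ↦ h0 i (hst hi),
    hX.integral_finset_sum_sq hmeas (hL2 hts) fun i hi ↦ h0 i (hts hi),
    hX.integral_finset_sum_sq hmeas (hL2 hint) fun i hi ↦ h0 i (hint hi)]

theorem iIndepFun.integral_finset_sum_sq_mul_finset_sum_sq_le (hX : iIndepFun X P)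
    (hmeas : ∀ i, Measurable (X i)) {s t : Finset ι} (hL : ∀ i ∈ s ∪ t, MemLp (X i) 4 P)
    (h0 : ∀ i ∈ s ∪ t, ∫ ω, X i ω ∂P = 0) :
    ∫ ω, (∑ i ∈ s, X i ω) ^ 2 * (∑ i ∈ t, X i ω) ^ 2 ∂P
      ≤ ∑ i ∈ s ∩ t, (∫ ω, X i ω ^ 4 ∂P - 3 * (∫ ω, X i ω ^ 2 ∂P) ^ 2)
        + 3 * (∑ i ∈ s, ∫ ω, X i ω ^ 2 ∂P) * (∑ i ∈ t, ∫ ω, X i ω ^ 2 ∂P) := by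
  have hint : s ∩ t ⊆ s ∪ t := inter_subset_left.trans subset_union_left
  have hv (u : Finset ι) : 0 ≤ ∑ i ∈ u, ∫ ω, X i ω ^ 2 ∂P :=
    sum_nonneg fun i _ ↦ integral_nonneg fun ω ↦ sq_nonneg _
  rw [hX.integral_finset_sum_sq_mul_finset_sum_sq hmeas hL h0,
    hX.integral_finset_sum_pow_four hmeas (fun i hi ↦ hL i (hint hi)) (fun i hi ↦ h0 i (hint hi)),
    ← sum_inter_add_sum_sdiff s t, ← sum_inter_add_sum_sdiff t s, inter_comm t s]
  nlinarith [mul_nonneg (hv (s \ t)) (hv (t \ s)), mul_nonneg (hv (s \ t)) (hv (s ∩ t)),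
    mul_nonneg (hv (t \ s)) (hv (s ∩ t))]

end BlockIndependence

section PoissonDivisorSums

variable {Ω : Type*} [MeasurableSpace Ω] {P : Measure Ω} [IsProbabilityMeasure P] {Z : ℕ → Ω → ℕ}

theorem iIndepFun.integral_sum_divisors_sq_mul_sq_le (hindep : iIndepFun Z P)
    (hmeas : ∀ k, Measurable (Z k)) (hlaw : ∀ k, 0 < k → HasLaw (Z k) Po((k : ℝ≥0)⁻¹) P)
    {a b : ℕ} (ha : 0 < a) (hb : 0 < b) :
    ∫ ω, (∑ d ∈ a.divisors, ((d : ℝ) * Z d ω - 1)) ^ 2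
        * (∑ d ∈ b.divisors, ((d : ℝ) * Z d ω - 1)) ^ 2 ∂P
      ≤ ∑ d ∈ (a.gcd b).divisors, (d : ℝ) ^ 3
        + 3 * (∑ d ∈ a.divisors, (d : ℝ)) * ∑ d ∈ b.divisors, (d : ℝ) := by
  set X : ℕ → Ω → ℝ := fun d ω ↦ d * Z d ω - 1
  have hXmeas (d : ℕ) : Measurable (X d) :=
    (measurable_from_nat (f := fun n : ℕ ↦ (d : ℝ) * n - 1)).comp (hmeas d)
  have hXindep : iIndepFun X P :=
    hindep.comp (fun d (n : ℕ) ↦ (d : ℝ) * n - 1) fun _ ↦ measurable_from_nat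
  have hmom (d : ℕ) (hd : 0 < d) := (hlaw d hd).moments_natCast_mul_sub_one hd.ne'
  have hpos : ∀ d ∈ a.divisors ∪ b.divisors, 0 < d := fun d hd ↦ by
    rcases mem_union.1 hd with h | h <;> exact Nat.pos_of_mem_divisors h
  have hvar (n : ℕ) : ∑ d ∈ n.divisors, ∫ ω, X d ω ^ 2 ∂P = ∑ d ∈ n.divisors, (d : ℝ) :=
    sum_congr rfl fun d hd ↦ (hmom d (Nat.pos_of_mem_divisors hd)).2.2.1
  have hcum : ∑ d ∈ (a.gcd b).divisors, (∫ ω, X d ω ^ 4 ∂P - 3 * (∫ ω, X d ω ^ 2 ∂P) ^ 2)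
      = ∑ d ∈ (a.gcd b).divisors, (d : ℝ) ^ 3 :=
    sum_congr rfl fun d hd ↦ by
      obtain ⟨-, -, h2, h4⟩ := hmom d (Nat.pos_of_mem_divisors hd)
      rw [h2, h4]
      ring
  have hbound := hXindep.integral_finset_sum_sq_mul_finset_sum_sq_le hXmeas
    (fun d hd ↦ (hmom d (hpos d hd)).1) (fun d hd ↦ (hmom d (hpos d hd)).2.1)
  rwa [Nat.divisors_inter_divisors ha.ne' hb.ne', hcum, hvar, hvar] at hbound

end PoissonDivisorSums

end ProbabilityTheory

/-- Let `{Z k}` be mutually independent Poisson random variables with parameters `1/k`,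
and `Y a = ∑_{d ∣ a} d • Z d`. There is an absolute constant `C > 0` such that for all
positive integers `a, b`,
`E[(Y a − τ(a))² (Y b − τ(b))²] ≤ C (σ₃(gcd(a,b)) + σ(a) σ(b))`, where
`σ₃(n) = ∑_{d ∣ n} d³`; in particular the left side is `≤ C' a² b²` for an absolute
constant `C' > 0`. -/
theorem stmt6 {Ω : Type*} [MeasurableSpace Ω] (P : Measure Ω) [IsProbabilityMeasure P]
    (Z : ℕ → Ω → ℕ)
    (hmeas : ∀ k, Measurable (Z k))
    (hpois : ∀ k : ℕ, 1 ≤ k → ∀ n : ℕ,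
      P {ω | Z k ω = n} =
        ENNReal.ofReal (Real.exp (-(1 / k)) * (1 / k : ℝ) ^ n / n.factorial))
    (hindep : iIndepFun Z P) :
    ∃ C : ℝ, 0 < C ∧ ∃ C' : ℝ, 0 < C' ∧ ∀ a b : ℕ, 0 < a → 0 < b →
      (∫ ω, ((∑ d ∈ a.divisors, (d : ℝ) * (Z d ω : ℝ)) - (a.divisors.card : ℝ)) ^ 2 *
          ((∑ d ∈ b.divisors, (d : ℝ) * (Z d ω : ℝ)) - (b.divisors.card : ℝ)) ^ 2 ∂P
        ≤ C * ((∑ d ∈ (Nat.gcd a b).divisors, (d : ℝ) ^ 3) +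
            (∑ d ∈ a.divisors, (d : ℝ)) * (∑ d ∈ b.divisors, (d : ℝ)))) ∧
      (∫ ω, ((∑ d ∈ a.divisors, (d : ℝ) * (Z d ω : ℝ)) - (a.divisors.card : ℝ)) ^ 2 *
          ((∑ d ∈ b.divisors, (d : ℝ) * (Z d ω : ℝ)) - (b.divisors.card : ℝ)) ^ 2 ∂P
        ≤ C' * ((a : ℝ) ^ 2 * (b : ℝ) ^ 2)) := by
  have hlaw (k : ℕ) (hk : 0 < k) : HasLaw (Z k) Po((k : ℝ≥0)⁻¹) P :=
    hasLaw_of_measure_eq (hmeas k) fun n ↦ by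
      rw [hpois k hk n, poissonMeasure_singleton]
      simp [one_div]
  refine ⟨3, by norm_num, 4, by norm_num, fun a b ha hb ↦ ?_⟩
  have hY (n : ℕ) (ω : Ω) : ∑ d ∈ n.divisors, (d : ℝ) * Z d ω - n.divisors.card
      = ∑ d ∈ n.divisors, ((d : ℝ) * Z d ω - 1) := by
    simp [sum_sub_distrib]
  simp only [hY]
  have hbound := hindep.integral_sum_divisors_sq_mul_sq_le hmeas hlaw ha hb
  have hσ₃ : 0 ≤ ∑ d ∈ (a.gcd b).divisors, (d : ℝ) ^ 3 := by positivity
  exact ⟨by linarith, by linarith [Nat.sum_divisors_gcd_pow_three_add_le ha hb]⟩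
end

section
/- Let s > 0, L ≥ 1, C > 0 and T > 0 be real numbers with 2LC < sT. Let x, y be real numbers with x ≥ s and y ≥ s, and let a, b, c, d be positive integers with a ≤ L and c ≤ L. If |ax − by| ≤ C/T and |cx − dy| ≤ C/T, then ad = bc. -/
/-- Rigidity of double near-resonances: if `2LC < sT`, `x, y ≥ s`, and positive
integers `a, b, c, d` with `a, c ≤ L` satisfy `|ax − by| ≤ C/T` and `|cx − dy| ≤ C/T`,
then `ad = bc`. -/
theorem stmt10 (s L C T : ℝ) (hs : 0 < s) (hL : 1 ≤ L) (hC : 0 < C) (hT : 0 < T)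
    (hmain : 2 * L * C < s * T)
    (x y : ℝ) (hx : s ≤ x) (hy : s ≤ y)
    (a b c d : ℕ) (ha : 0 < a) (hb : 0 < b) (hc : 0 < c) (hd : 0 < d)
    (haL : (a : ℝ) ≤ L) (hcL : (c : ℝ) ≤ L)
    (h1 : |(a : ℝ) * x - (b : ℝ) * y| ≤ C / T)
    (h2 : |(c : ℝ) * x - (d : ℝ) * y| ≤ C / T) :
    a * d = b * c := by
  have hy0 : 0 < y := lt_of_lt_of_le hs hy
  have key : ((a : ℝ) * d - (b : ℝ) * c) * y
      = (c : ℝ) * ((a : ℝ) * x - (b : ℝ) * y) - (a : ℝ) * ((c : ℝ) * x - (d : ℝ) * y) := by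
    ring
  have hbound : |((a : ℝ) * d - (b : ℝ) * c)| * y ≤ 2 * L * (C / T) := by
    rw [← abs_of_pos hy0, ← abs_mul, key]
    calc |(c : ℝ) * ((a : ℝ) * x - (b : ℝ) * y) - (a : ℝ) * ((c : ℝ) * x - (d : ℝ) * y)|
        ≤ |(c : ℝ)| * |(a : ℝ) * x - (b : ℝ) * y| + |(a : ℝ)| * |(c : ℝ) * x - (d : ℝ) * y| := by
          calc _ ≤ |(c : ℝ) * ((a : ℝ) * x - (b : ℝ) * y)| + |(a : ℝ) * ((c : ℝ) * x - (d : ℝ) * y)| := abs_sub _ _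
          _ = _ := by rw [abs_mul, abs_mul]
      _ ≤ L * (C / T) + L * (C / T) := by
          have hL0 : (0:ℝ) ≤ L := by linarith
          exact add_le_add (mul_le_mul (by rwa [abs_of_nonneg (by positivity)]) h1 (abs_nonneg _) hL0)
            (mul_le_mul (by rwa [abs_of_nonneg (by positivity)]) h2 (abs_nonneg _) hL0)
      _ = 2 * L * (C / T) := by ring
  have hlt : 2 * L * (C / T) < s := by
    calc 2 * L * (C / T) = 2 * L * C / T := by ring
      _ < s := by rw [div_lt_iff₀ hT]; linarith
  have h3 : |((a : ℝ) * d - (b : ℝ) * c)| * y < y :=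
    lt_of_le_of_lt hbound (lt_of_lt_of_le hlt hy)
  have h4 : |((a : ℝ) * d - (b : ℝ) * c)| < 1 := by
    by_contra h
    push_neg at h
    nlinarith [abs_nonneg ((a : ℝ) * d - (b : ℝ) * c)]
  have h5 : |((a : ℤ) * d - (b : ℤ) * c)| < 1 := by
    have h6 : |(((a : ℤ) * d - (b : ℤ) * c : ℤ) : ℝ)| < 1 := by push_cast; exact h4
    exact_mod_cast h6
  have h7 : (a : ℤ) * d = (b : ℤ) * c := by
    have := Int.abs_lt_one_iff.mp h5
    linarith
  exact_mod_cast h7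
end

section
/- Let s > 0, 0 < ν < 1 and A ≥ 0, and let (ℓ_j)_{j ∈ ℕ} be a sequence of real numbers with ℓ_j ≥ s for all j whose counting function 𝒩(x) = #{j : ℓ_j ≤ x} satisfies |𝒩(x) − ∫_s^x (e^t / t) dt| ≤ A e^{ν x} for all x ≥ s. Then there is a constant C′ > 0 depending only on A, ν and s such that for all L ≥ s, T ≥ 1 and 0 < C₀ ≤ 1 one has ∑ ℓ_i² ℓ_j² e^{−ℓ_i − ℓ_j} ≤ C′ (L³/T + 1), where the sum is over all pairs of distinct indices i ≠ j with ℓ_i ≤ L, ℓ_j ≤ L and |ℓ_i − ℓ_j| ≤ C₀/T. -/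
open Finset

lemma aux_integrable (a b : ℝ) (ha : 0 < a) (hab : a ≤ b) :
    IntervalIntegrable (fun t => Real.exp t / t) MeasureTheory.volume a b := by
  apply ContinuousOn.intervalIntegrable
  apply ContinuousOn.div Real.continuous_exp.continuousOn continuousOn_id
  intro x hx
  rw [Set.uIcc_of_le hab] at hx
  exact ne_of_gt (lt_of_lt_of_le ha hx.1)

lemma aux_int_le (a b : ℝ) (ha : 0 < a) (hab : a ≤ b) :
    (∫ t in a..b, Real.exp t / t) ≤ (b - a) * (Real.exp b / a) := by
  have h := intervalIntegral.integral_mono_on (f := fun t => Real.exp t / t)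
      (g := fun _ => Real.exp b / a) hab (aux_integrable a b ha hab)
      intervalIntegrable_const (fun x hx => by
        exact div_le_div₀ (Real.exp_pos b).le (Real.exp_le_exp.2 hx.2) ha hx.1)
  simp only [intervalIntegral.integral_const, smul_eq_mul] at h
  exact h

lemma aux_int_nonneg (a b : ℝ) (ha : 0 < a) (hab : a ≤ b) :
    0 ≤ ∫ t in a..b, Real.exp t / t := by
  apply intervalIntegral.integral_nonneg hab
  intro u hu
  exact div_nonneg (Real.exp_pos u).le (le_trans ha.le hu.1)

lemma aux_sum_k4 (η : ℝ) (hη : 0 < η) (k0 K : ℕ) :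
    ∑ k ∈ Finset.Icc k0 K, (k:ℝ)^4 * Real.exp (-(η*k)) ≤
      (4096/η^4) / (1 - Real.exp (-(η/2))) := by
  have hr1 : Real.exp (-(η/2)) < 1 := Real.exp_lt_one_iff.2 (by linarith)
  have hr0 : 0 < Real.exp (-(η/2)) := Real.exp_pos _
  calc ∑ k ∈ Finset.Icc k0 K, (k:ℝ)^4 * Real.exp (-(η*k))
      ≤ ∑ k ∈ Finset.range (K+1), (4096/η^4) * (Real.exp (-(η/2)))^k := by
        apply le_trans (Finset.sum_le_sum_of_subset_of_nonneg
          (fun k hk => Finset.mem_range.2 (Nat.lt_succ_of_le (Finset.mem_Icc.1 hk).2))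
          (fun k _ _ => by positivity))
        apply Finset.sum_le_sum
        intro k _
        have hk4 : (k:ℝ)^4 ≤ (4096/η^4) * Real.exp (η/2*k) := by
          have h1 : (η*k/8)^4 ≤ (1 + η*k/8)^4 := by
            apply pow_le_pow_left₀ (by positivity)
            linarith
          have h2 : (1 + η*k/8)^4 ≤ (Real.exp (η*k/8))^4 := by
            apply pow_le_pow_left₀ (by positivity)
            have := Real.add_one_le_exp (η*k/8); linarith
          have h3 : (Real.exp (η*k/8))^4 = Real.exp (η/2*k) := by
            rw [← Real.exp_nat_mul]   -- might not typecheck; it's ^ (4:ℕ)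
            congr 1; push_cast; ring
          have h4 : (η*k/8)^4 = η^4 * (k:ℝ)^4 / 4096 := by ring
          have hη4 : 0 < η^4 := by positivity
          rw [h3] at h2
          rw [h4] at h1
          rw [div_mul_eq_mul_div, le_div_iff₀ hη4]
          calc (k:ℝ)^4 * η^4 = η^4 * (k:ℝ)^4 := by ring
            _ ≤ Real.exp (η/2*k) * 4096 := by nlinarith [h1, h2]
            _ = 4096 * Real.exp (η/2*k) := by ring
        have : (k:ℝ)^4 * Real.exp (-(η*k)) ≤
            ((4096/η^4) * Real.exp (η/2*k)) * Real.exp (-(η*k)) := by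
          apply mul_le_mul_of_nonneg_right hk4 (Real.exp_pos _).le
        refine this.trans (le_of_eq ?_)
        rw [mul_assoc, ← Real.exp_add, ← Real.exp_nat_mul]
        congr 2; ring
    _ = (4096/η^4) * ∑ k ∈ Finset.range (K+1), (Real.exp (-(η/2)))^k := by
        rw [Finset.mul_sum]
    _ ≤ (4096/η^4) / (1 - Real.exp (-(η/2))) := by
        set r := Real.exp (-(η/2)) with hrdef
        have h2 : (0:ℝ) < 1 - r := by linarith
        have hg : ∑ k ∈ Finset.range (K+1), r^k = (1 - r^(K+1))/(1-r) := by
          rw [geom_sum_eq hr1.ne, div_eq_div_iff (by linarith) (by linarith)]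
          ring
        rw [hg, div_eq_mul_inv, div_eq_mul_inv]
        apply mul_le_mul_of_nonneg_left _ (by positivity)
        nth_rewrite 2 [← one_mul ((1-r)⁻¹)]
        apply mul_le_mul_of_nonneg_right _ (by positivity)
        have : (0:ℝ) ≤ r^(K+1) := by positivity
        linarith

set_option maxHeartbeats 2000000 in
/-- Abstract form of the bound `Σ₁ ≪ L³/T + 1`: if the counting function of the
sequence `(ℓ j)` satisfies the prime-geodesic-type asymptotic
`|𝒩(x) − ∫_s^x e^t/t dt| ≤ A e^{νx}`, then there is `C' > 0` depending only on
`A, ν, s` such that for all `L ≥ s`, `T ≥ 1`, `0 < C₀ ≤ 1`,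
`∑_{i ≠ j, ℓᵢ,ℓⱼ ≤ L, |ℓᵢ−ℓⱼ| ≤ C₀/T} ℓᵢ² ℓⱼ² e^{−ℓᵢ−ℓⱼ} ≤ C' (L³/T + 1)`. -/
theorem stmt16 (s ν A : ℝ) (hs : 0 < s) (hν0 : 0 < ν) (hν1 : ν < 1) (hA : 0 ≤ A) :
    ∃ C' : ℝ, 0 < C' ∧
      ∀ ℓ : ℕ → ℝ, (∀ j, s ≤ ℓ j) →
        ∀ (hfin : ∀ x : ℝ, {j : ℕ | ℓ j ≤ x}.Finite),
        (∀ x : ℝ, s ≤ x →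
          |((hfin x).toFinset.card : ℝ) - ∫ t in s..x, Real.exp t / t| ≤
            A * Real.exp (ν * x)) →
        ∀ L T C₀ : ℝ, s ≤ L → 1 ≤ T → 0 < C₀ → C₀ ≤ 1 →
          ∑ p ∈ ((hfin L).toFinset ×ˢ (hfin L).toFinset).filter
              (fun p => p.1 ≠ p.2 ∧ |ℓ p.1 - ℓ p.2| ≤ C₀ / T),
            ℓ p.1 ^ 2 * ℓ p.2 ^ 2 * Real.exp (-ℓ p.1 - ℓ p.2) ≤
            C' * (L ^ 3 / T + 1) := by
  have he1 : (0:ℝ) < Real.exp 1 := Real.exp_pos 1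
  set k0n : ℕ := ⌈s⌉₊ + 3 with hk0n_def
  have hceil : s ≤ (⌈s⌉₊ : ℝ) := Nat.le_ceil s
  have hsk0 : s + 3 ≤ (k0n:ℝ) := by rw [hk0n_def]; push_cast; linarith
  have h3k0 : (3:ℝ) ≤ (k0n:ℝ) := by
    rw [hk0n_def]; push_cast
    have h0 : (0:ℝ) ≤ (⌈s⌉₊:ℝ) := Nat.cast_nonneg _
    linarith
  have hsk0' : s ≤ (k0n:ℝ) := by linarith
  have hsk01 : s ≤ (k0n:ℝ) + 1 := by linarith
  set η : ℝ := 1 - ν with hη_def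
  have hη : 0 < η := by rw [hη_def]; linarith
  set Cs : ℝ := (∫ t in s..((k0n:ℝ)+1), Real.exp t / t) + A * Real.exp (ν*((k0n:ℝ)+1))
    with hCs_def
  have hCs0 : 0 ≤ Cs := by
    have := aux_int_nonneg s ((k0n:ℝ)+1) hs hsk01
    have : 0 ≤ A * Real.exp (ν*((k0n:ℝ)+1)) := by positivity
    rw [hCs_def]
    have := aux_int_nonneg s ((k0n:ℝ)+1) hs hsk01
    linarith
  set Fs : ℝ := ((k0n:ℝ)+1)^4 * Real.exp 1 with hFs_def
  have hFs0 : 0 ≤ Fs := by rw [hFs_def]; positivity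
  set CG : ℝ := (4096/η^4) / (1 - Real.exp (-(η/2))) with hCG_def
  have hCG0 : 0 ≤ CG := by
    rw [hCG_def]
    have h1 : Real.exp (-(η/2)) < 1 := Real.exp_lt_one_iff.2 (by linarith)
    apply div_nonneg (by positivity) (by linarith)
  refine ⟨Cs*Cs*Fs + 288*(Real.exp 1)^4 + (320*A+64*A^2)*(Real.exp 1)^4*CG + 1, ?_, ?_⟩
  · have h1 : 0 ≤ Cs*Cs*Fs := by positivity
    have h2 : 0 ≤ (320*A+64*A^2)*(Real.exp 1)^4*CG := by positivity
    have h3 : 0 < 288*(Real.exp 1)^4 := by positivity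
    linarith
  intro ℓ hℓs hfin hcount L T C₀ hL hT hC₀ hC₀1
  have hT0 : (0:ℝ) < T := by linarith
  set δ : ℝ := C₀ / T with hδ_def
  have hδ0 : 0 < δ := div_pos hC₀ hT0
  have hδ1 : δ ≤ 1 := by
    rw [hδ_def, div_le_one hT0]; linarith
  have hδT : δ ≤ 1 / T := by
    rw [hδ_def]; gcongr
  -- monotonicity of the counting finsets
  have hmono : ∀ x y : ℝ, x ≤ y → (hfin x).toFinset ⊆ (hfin y).toFinset := by
    intro x y hxy j hj
    simp only [Set.Finite.mem_toFinset, Set.mem_setOf_eq] at *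
    linarith
  -- window counting lemma
  have hwin : ∀ a b : ℝ, s ≤ a → a ≤ b → ∀ S : Finset ℕ,
      (∀ j ∈ S, ℓ j ≤ b) → (∀ j ∈ S, a < ℓ j) →
      (S.card : ℝ) ≤ (∫ t in a..b, Real.exp t / t) + 2*A*Real.exp (ν*b) := by
    intro a b ha hab S h1 h2
    have hsub : S ⊆ (hfin b).toFinset \ (hfin a).toFinset := by
      intro j hj
      simp only [Finset.mem_sdiff, Set.Finite.mem_toFinset, Set.mem_setOf_eq]
      exact ⟨h1 j hj, by have := h2 j hj; linarith⟩
    have hsub2 : (hfin a).toFinset ⊆ (hfin b).toFinset := hmono a b hab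
    have hcard : S.card ≤ (hfin b).toFinset.card - (hfin a).toFinset.card := by
      have := Finset.card_le_card hsub
      rwa [Finset.card_sdiff_of_subset hsub2] at this
    have hcard2 : (S.card : ℝ) ≤ ((hfin b).toFinset.card : ℝ) - ((hfin a).toFinset.card : ℝ) := by
      have hle := Finset.card_le_card hsub2
      have := (Nat.cast_le (α := ℝ)).2 hcard
      rwa [Nat.cast_sub hle] at this
    have hca := abs_le.1 (hcount a ha)
    have hcb := abs_le.1 (hcount b (le_trans ha hab))
    have hadd := intervalIntegral.integral_add_adjacent_intervals
      (aux_integrable s a hs ha) (aux_integrable a b (lt_of_lt_of_le hs ha) hab)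
      (f := fun t => Real.exp t / t)
    have hexp : Real.exp (ν*a) ≤ Real.exp (ν*b) := by
      apply Real.exp_le_exp.2
      apply mul_le_mul_of_nonneg_left hab hν0.le
    have hAe : A * Real.exp (ν*a) ≤ A * Real.exp (ν*b) :=
      mul_le_mul_of_nonneg_left hexp hA
    linarith [hca.1, hca.2, hcb.1, hcb.2]
  -- setup for the double sum
  set A' : Finset ℕ := (hfin L).toFinset with hA'_def
  set tt : ℕ → Finset ℕ :=
    fun i => A'.filter (fun j => i ≠ j ∧ |ℓ i - ℓ j| ≤ C₀ / T) with htt_def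
  set F : ℝ → ℝ := fun x => x^2*(x+1)^2*Real.exp (-(2*x))*Real.exp 1 with hF_def
  have hF_nonneg : ∀ x, 0 ≤ F x := by intro x; rw [hF_def]; positivity
  set W : ℕ → ℝ := fun i => ((tt i).card : ℝ) with hW_def
  have hW_nonneg : ∀ i, 0 ≤ W i := fun i => Nat.cast_nonneg _
  have hsplit : ∑ p ∈ ((hfin L).toFinset ×ˢ (hfin L).toFinset).filter
        (fun p => p.1 ≠ p.2 ∧ |ℓ p.1 - ℓ p.2| ≤ C₀ / T),
        ℓ p.1 ^ 2 * ℓ p.2 ^ 2 * Real.exp (-ℓ p.1 - ℓ p.2)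
      = ∑ i ∈ A', ∑ j ∈ tt i, ℓ i ^ 2 * ℓ j ^ 2 * Real.exp (-ℓ i - ℓ j) := by
    apply Finset.sum_finset_product
    intro p
    rw [htt_def]
    simp only [Finset.mem_filter, Finset.mem_product, hA'_def]
    tauto
  have hstep1 : ∀ i ∈ A', ∑ j ∈ tt i, ℓ i ^ 2 * ℓ j ^ 2 * Real.exp (-ℓ i - ℓ j)
      ≤ W i * F (ℓ i) := by
    intro i _
    have hterm : ∀ j ∈ tt i, ℓ i ^ 2 * ℓ j ^ 2 * Real.exp (-ℓ i - ℓ j) ≤ F (ℓ i) := by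
      intro j hj
      rw [htt_def] at hj
      simp only [Finset.mem_filter] at hj
      have habs : |ℓ i - ℓ j| ≤ 1 := le_trans hj.2.2 (by rw [← hδ_def]; exact hδ1)
      have habs2 := abs_le.1 habs
      have hℓi := hℓs i
      have hℓj := hℓs j
      have h1 : ℓ j ^ 2 ≤ (ℓ i + 1)^2 := by nlinarith
      have h2 : Real.exp (-ℓ i - ℓ j) ≤ Real.exp (-(2*ℓ i)) * Real.exp 1 := by
        rw [← Real.exp_add]
        apply Real.exp_le_exp.2
        linarith
      calc ℓ i ^ 2 * ℓ j ^ 2 * Real.exp (-ℓ i - ℓ j)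
          ≤ ℓ i ^ 2 * (ℓ i + 1) ^ 2 * Real.exp (-ℓ i - ℓ j) := by
            apply mul_le_mul_of_nonneg_right _ (Real.exp_pos _).le
            apply mul_le_mul_of_nonneg_left h1 (sq_nonneg _)
        _ ≤ ℓ i ^ 2 * (ℓ i + 1) ^ 2 * (Real.exp (-(2*ℓ i)) * Real.exp 1) := by
            apply mul_le_mul_of_nonneg_left h2 (by positivity)
        _ = F (ℓ i) := by rw [hF_def]; ring
    have := Finset.sum_le_card_nsmul (tt i) _ (F (ℓ i)) hterm
    rw [nsmul_eq_mul] at this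
    exact this
  have hmain : ∑ p ∈ ((hfin L).toFinset ×ˢ (hfin L).toFinset).filter
        (fun p => p.1 ≠ p.2 ∧ |ℓ p.1 - ℓ p.2| ≤ C₀ / T),
        ℓ p.1 ^ 2 * ℓ p.2 ^ 2 * Real.exp (-ℓ p.1 - ℓ p.2)
      ≤ ∑ i ∈ A', W i * F (ℓ i) := by
    rw [hsplit]; exact Finset.sum_le_sum hstep1
  have hST_split : ∑ i ∈ A', W i * F (ℓ i)
      = ∑ i ∈ A'.filter (fun i => ℓ i ≤ (k0n:ℝ)), W i * F (ℓ i)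
      + ∑ i ∈ A'.filter (fun i => ¬ ℓ i ≤ (k0n:ℝ)), W i * F (ℓ i) :=
    (Finset.sum_filter_add_sum_filter_not _ _ _).symm
  have hNk01 : ((hfin ((k0n:ℝ)+1)).toFinset.card : ℝ) ≤ Cs := by
    have h := abs_le.1 (hcount ((k0n:ℝ)+1) hsk01)
    rw [hCs_def]; linarith [h.2]
  have hsmall : ∑ i ∈ A'.filter (fun i => ℓ i ≤ (k0n:ℝ)), W i * F (ℓ i)
      ≤ Cs * (Cs * Fs) := by
    have hWb : ∀ i ∈ A'.filter (fun i => ℓ i ≤ (k0n:ℝ)), W i * F (ℓ i) ≤ Cs * Fs := by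
      intro i hi
      simp only [Finset.mem_filter] at hi
      have hWi : W i ≤ Cs := by
        have hsub : tt i ⊆ (hfin ((k0n:ℝ)+1)).toFinset := by
          intro j hj
          rw [htt_def] at hj
          simp only [Finset.mem_filter] at hj
          simp only [Set.Finite.mem_toFinset, Set.mem_setOf_eq]
          have h2 := abs_le.1 (le_trans hj.2.2 (show C₀/T ≤ 1 by rw [← hδ_def]; exact hδ1))
          linarith [hi.2, h2.1]
        calc W i ≤ ((hfin ((k0n:ℝ)+1)).toFinset.card : ℝ) :=
              Nat.cast_le.2 (Finset.card_le_card hsub)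
          _ ≤ Cs := hNk01
      have hFi : F (ℓ i) ≤ Fs := by
        have h1 := hℓs i
        have hx2 : (ℓ i)^2 ≤ ((k0n:ℝ)+1)^2 := by nlinarith [hi.2]
        have hx12 : (ℓ i + 1)^2 ≤ ((k0n:ℝ)+1)^2 := by nlinarith [hi.2]
        have hxx := mul_le_mul hx2 hx12 (sq_nonneg _)
          (by positivity : (0:ℝ) ≤ ((k0n:ℝ)+1)^2)
        have hE1 : Real.exp (-(2*ℓ i)) ≤ 1 := Real.exp_le_one_iff.2 (by linarith)
        rw [hF_def, hFs_def]
        calc (ℓ i)^2*(ℓ i+1)^2*Real.exp (-(2*ℓ i))*Real.exp 1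
            ≤ (((k0n:ℝ)+1)^2*((k0n:ℝ)+1)^2)*Real.exp (-(2*ℓ i))*Real.exp 1 := by
              apply mul_le_mul_of_nonneg_right
                (mul_le_mul_of_nonneg_right hxx (Real.exp_pos _).le) he1.le
          _ ≤ (((k0n:ℝ)+1)^2*((k0n:ℝ)+1)^2)*1*Real.exp 1 := by
              apply mul_le_mul_of_nonneg_right
                (mul_le_mul_of_nonneg_left hE1 (by positivity)) he1.le
          _ = ((k0n:ℝ)+1)^4*Real.exp 1 := by ring
      exact mul_le_mul hWi hFi (hF_nonneg _) hCs0
    calc ∑ i ∈ A'.filter (fun i => ℓ i ≤ (k0n:ℝ)), W i * F (ℓ i)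
        ≤ ∑ _i ∈ A'.filter (fun i => ℓ i ≤ (k0n:ℝ)), Cs * Fs := Finset.sum_le_sum hWb
      _ = ((A'.filter (fun i => ℓ i ≤ (k0n:ℝ))).card : ℝ) * (Cs * Fs) := by
          rw [Finset.sum_const, nsmul_eq_mul]
      _ ≤ Cs * (Cs * Fs) := by
          apply mul_le_mul_of_nonneg_right _ (mul_nonneg hCs0 hFs0)
          have hsub : A'.filter (fun i => ℓ i ≤ (k0n:ℝ)) ⊆ (hfin ((k0n:ℝ)+1)).toFinset := by
            intro i hi
            simp only [Finset.mem_filter] at hi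
            simp only [Set.Finite.mem_toFinset, Set.mem_setOf_eq]
            linarith [hi.2]
          calc ((A'.filter (fun i => ℓ i ≤ (k0n:ℝ))).card : ℝ)
              ≤ ((hfin ((k0n:ℝ)+1)).toFinset.card : ℝ) :=
                Nat.cast_le.2 (Finset.card_le_card hsub)
            _ ≤ Cs := hNk01
  -- large part
  set K : ℕ := ⌊L⌋₊ with hK_def
  set A₂ : Finset ℕ := A'.filter (fun i => ¬ ℓ i ≤ (k0n:ℝ)) with hA2_def
  have hA2mem : ∀ i ∈ A₂, (k0n:ℝ) < ℓ i ∧ ℓ i ≤ L := by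
    intro i hi
    rw [hA2_def] at hi
    simp only [Finset.mem_filter, hA'_def, Set.Finite.mem_toFinset, Set.mem_setOf_eq,
      not_le] at hi
    exact ⟨hi.2, hi.1⟩
  have hregroup : ∑ i ∈ A₂, W i * F (ℓ i)
      = ∑ k ∈ Finset.Icc k0n K,
          ∑ i ∈ A₂.filter (fun i => (k:ℝ) < ℓ i ∧ ℓ i ≤ (k:ℝ)+1), W i * F (ℓ i) := by
    have hpt : ∀ i ∈ A₂, W i * F (ℓ i)
        = ∑ k ∈ Finset.Icc k0n K,
            (if (k:ℝ) < ℓ i ∧ ℓ i ≤ (k:ℝ)+1 then W i * F (ℓ i) else 0) := by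
      intro i hi
      obtain ⟨hlo, hhi⟩ := hA2mem i hi
      have hx0 : (0:ℝ) ≤ ℓ i := le_trans hs.le (hℓs i)
      have hn_lt : k0n < ⌈ℓ i⌉₊ := Nat.lt_ceil.2 hlo
      have hn1 : 1 ≤ ⌈ℓ i⌉₊ := by omega
      have hki_cast : ((⌈ℓ i⌉₊ - 1:ℕ):ℝ) = (⌈ℓ i⌉₊:ℝ) - 1 := by
        rw [Nat.cast_sub hn1]; norm_num
      have hAA : ((⌈ℓ i⌉₊ - 1:ℕ):ℝ) < ℓ i := by
        rw [hki_cast]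
        have h := Nat.ceil_lt_add_one hx0
        linarith only [h]
      have hBB : ℓ i ≤ ((⌈ℓ i⌉₊ - 1:ℕ):ℝ) + 1 := by
        rw [hki_cast]
        have h := Nat.le_ceil (ℓ i)
        linarith only [h]
      have hmem : ⌈ℓ i⌉₊ - 1 ∈ Finset.Icc k0n K := by
        rw [Finset.mem_Icc]
        refine ⟨by omega, ?_⟩
        rw [hK_def]
        exact Nat.le_floor (le_trans hAA.le hhi)
      have hz : ∑ k ∈ Finset.Icc k0n K,
          (if (k:ℝ) < ℓ i ∧ ℓ i ≤ (k:ℝ)+1 then W i * F (ℓ i) else 0)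
          = W i * F (ℓ i) := by
        rw [Finset.sum_eq_single_of_mem (⌈ℓ i⌉₊ - 1) hmem ?_]
        · rw [if_pos ⟨hAA, hBB⟩]
        · intro b _ hbne
          rw [if_neg]
          rintro ⟨h1, h2⟩
          apply hbne
          have c1 : (b:ℝ) < ((⌈ℓ i⌉₊ - 1:ℕ):ℝ) + 1 := lt_of_lt_of_le h1 hBB
          have c2 : ((⌈ℓ i⌉₊ - 1:ℕ):ℝ) < (b:ℝ) + 1 := lt_of_lt_of_le hAA h2
          have c1' : (b:ℕ) < (⌈ℓ i⌉₊ - 1) + 1 := by exact_mod_cast c1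
          have c2' : (⌈ℓ i⌉₊ - 1) < (b:ℕ) + 1 := by exact_mod_cast c2
          omega
      exact hz.symm
    calc ∑ i ∈ A₂, W i * F (ℓ i)
        = ∑ i ∈ A₂, ∑ k ∈ Finset.Icc k0n K,
            (if (k:ℝ) < ℓ i ∧ ℓ i ≤ (k:ℝ)+1 then W i * F (ℓ i) else 0) :=
          Finset.sum_congr rfl hpt
      _ = ∑ k ∈ Finset.Icc k0n K, ∑ i ∈ A₂,
            (if (k:ℝ) < ℓ i ∧ ℓ i ≤ (k:ℝ)+1 then W i * F (ℓ i) else 0) :=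
          Finset.sum_comm
      _ = ∑ k ∈ Finset.Icc k0n K,
            ∑ i ∈ A₂.filter (fun i => (k:ℝ) < ℓ i ∧ ℓ i ≤ (k:ℝ)+1), W i * F (ℓ i) := by
          exact Finset.sum_congr rfl (fun k _ => (Finset.sum_filter _ _).symm)
  have hperk : ∀ k ∈ Finset.Icc k0n K,
      ∑ i ∈ A₂.filter (fun i => (k:ℝ) < ℓ i ∧ ℓ i ≤ (k:ℝ)+1), W i * F (ℓ i)
      ≤ 144*(Real.exp 1)^4*δ*(k:ℝ)^2
        + (320*A+64*A^2)*(Real.exp 1)^4*((k:ℝ)^4 * Real.exp (-(η*(k:ℝ)))) := by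
    intro k hk
    have hkk0 : k0n ≤ k := (Finset.mem_Icc.1 hk).1
    have hk3 : (3:ℝ) ≤ (k:ℝ) := le_trans h3k0 (Nat.cast_le.2 hkk0)
    have hks : s ≤ (k:ℝ) := by
      have h : ((k0n:ℕ):ℝ) ≤ (k:ℝ) := Nat.cast_le.2 hkk0
      linarith only [h, hsk0, hs]
    have hk0 : (0:ℝ) < (k:ℝ) := by linarith only [hk3]
    have hks3 : s + 3 ≤ (k:ℝ) := by
      have h : ((k0n:ℕ):ℝ) ≤ (k:ℝ) := Nat.cast_le.2 hkk0
      linarith only [h, hsk0]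
    set Ek : ℝ := Real.exp (k:ℝ) with hEk_def
    set vk : ℝ := Real.exp (ν*(k:ℝ)) with hvk_def
    set uk : ℝ := Real.exp (-(2*(k:ℝ))) with huk_def
    set wk : ℝ := Real.exp (-(η*(k:ℝ))) with hwk_def
    set ck : ℝ := Real.exp 1 * (Ek/(k:ℝ) + 2*A*vk) with hck_def
    set mk : ℝ := (Real.exp 1)^2 * (9*δ*Ek/(k:ℝ) + 2*A*vk) with hmk_def
    set fk : ℝ := 16*Real.exp 1*(k:ℝ)^4*uk with hfk_def
    have hck0 : 0 ≤ ck := by rw [hck_def]; positivity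
    have hmk0 : 0 ≤ mk := by rw [hmk_def]; positivity
    have hfk0 : 0 ≤ fk := by rw [hfk_def]; positivity
    set Sk := A₂.filter (fun i => (k:ℝ) < ℓ i ∧ ℓ i ≤ (k:ℝ)+1) with hSk_def
    have hSkmem : ∀ i ∈ Sk, ((k:ℝ) < ℓ i ∧ ℓ i ≤ (k:ℝ)+1) ∧ ℓ i ≤ L := by
      intro i hi
      rw [hSk_def] at hi
      simp only [Finset.mem_filter] at hi
      exact ⟨hi.2, (hA2mem i hi.1).2⟩
    -- count of indices in the unit window (k, k+1]
    have hcnt : ((Sk.card : ℕ) : ℝ) ≤ ck := by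
      have h := hwin (k:ℝ) ((k:ℝ)+1) hks (by linarith) Sk
        (fun j hj => (hSkmem j hj).1.2) (fun j hj => (hSkmem j hj).1.1)
      have hint := aux_int_le (k:ℝ) ((k:ℝ)+1) hk0 (by linarith)
      have e1 : Real.exp ((k:ℝ)+1) = Ek * Real.exp 1 := Real.exp_add _ _
      have e2 : Real.exp (ν*((k:ℝ)+1)) = vk * Real.exp ν := by
        rw [hvk_def, ← Real.exp_add]; congr 1; ring
      have e3 : Real.exp ν ≤ Real.exp 1 := Real.exp_le_exp.2 hν1.le
      have h4 : 2*A*Real.exp (ν*((k:ℝ)+1)) ≤ 2*A*(vk * Real.exp 1) := by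
        rw [e2]
        exact mul_le_mul_of_nonneg_left
          (mul_le_mul_of_nonneg_left e3 (Real.exp_pos _).le) (by positivity)
      have h5 : ((k:ℝ)+1-(k:ℝ)) * (Real.exp ((k:ℝ)+1)/(k:ℝ))
          = Real.exp 1 * (Ek/(k:ℝ)) := by rw [e1]; ring
      have hck_expand : ck = Real.exp 1 * (Ek/(k:ℝ)) + 2*A*(vk*Real.exp 1) := by
        rw [hck_def]; ring
      rw [hck_expand]
      calc ((Sk.card : ℕ) : ℝ)
          ≤ (∫ t in (k:ℝ)..((k:ℝ)+1), Real.exp t / t) + 2*A*Real.exp (ν*((k:ℝ)+1)) := h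
        _ ≤ ((k:ℝ)+1-(k:ℝ)) * (Real.exp ((k:ℝ)+1)/(k:ℝ)) + 2*A*(vk*Real.exp 1) := by
            linarith only [hint, h4]
        _ = Real.exp 1 * (Ek/(k:ℝ)) + 2*A*(vk*Real.exp 1) := by rw [h5]
    -- per index window bound
    have hWk : ∀ i ∈ Sk, W i ≤ mk := by
      intro i hi
      obtain ⟨⟨hx1, hx2⟩, _⟩ := hSkmem i hi
      have hsa : s ≤ ℓ i - 2*δ := by linarith only [hx1, hδ1, hks3]
      have hab : ℓ i - 2*δ ≤ ℓ i + δ := by linarith only [hδ0]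
      have ha0 : 0 < ℓ i - 2*δ := by linarith only [hx1, hδ1, hks3, hs]
      have h := hwin (ℓ i - 2*δ) (ℓ i + δ) hsa hab (tt i) ?_ ?_
      · have hint := aux_int_le (ℓ i - 2*δ) (ℓ i + δ) ha0 hab
        have hb1 : Real.exp (ℓ i + δ) ≤ Ek * (Real.exp 1 * Real.exp 1) := by
          rw [hEk_def, ← Real.exp_add, ← Real.exp_add]
          apply Real.exp_le_exp.2
          linarith only [hx2, hδ1]
        have hb2 : (k:ℝ)/3 ≤ ℓ i - 2*δ := by linarith only [hx1, hδ1, hk3]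
        have hb3 : Real.exp (ℓ i + δ)/(ℓ i - 2*δ)
            ≤ (Ek * (Real.exp 1 * Real.exp 1))/((k:ℝ)/3) := by
          apply div_le_div₀ (by positivity) hb1 (by positivity) hb2
        have hb4 : (ℓ i + δ - (ℓ i - 2*δ)) * (Real.exp (ℓ i + δ)/(ℓ i - 2*δ))
            ≤ 3*δ*((Ek * (Real.exp 1 * Real.exp 1))/((k:ℝ)/3)) := by
          have : (ℓ i + δ - (ℓ i - 2*δ)) = 3*δ := by ring
          rw [this]
          apply mul_le_mul_of_nonneg_left hb3 (by positivity)
        have hkne : (k:ℝ) ≠ 0 := hk0.ne'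
        have hb5 : 3*δ*((Ek * (Real.exp 1 * Real.exp 1))/((k:ℝ)/3))
            = (Real.exp 1)^2 * (9*δ*Ek/(k:ℝ)) := by
          generalize Real.exp 1 = ee
          field_simp
          ring
        have hb6 : Real.exp (ν*(ℓ i + δ)) ≤ vk * ((Real.exp 1)^2) := by
          have h2e : (Real.exp 1)^2 = Real.exp 2 := by
            rw [← Real.exp_one_rpow 2, Real.rpow_two]
          rw [hvk_def, h2e, ← Real.exp_add]
          apply Real.exp_le_exp.2
          have p : (0:ℝ) ≤ (1-ν)*(ℓ i + δ - (k:ℝ)) :=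
            mul_nonneg (by linarith only [hν1]) (by linarith only [hx1, hδ0])
          linarith only [p, hx2, hδ1]
        have hb7 : 2*A*Real.exp (ν*(ℓ i + δ)) ≤ 2*A*(vk * ((Real.exp 1)^2)) :=
          mul_le_mul_of_nonneg_left hb6 (by positivity)
        have hmk_expand : mk = (Real.exp 1)^2 * (9*δ*Ek/(k:ℝ)) + 2*A*(vk*(Real.exp 1)^2) := by
          rw [hmk_def]; ring
        rw [hW_def, hmk_expand]
        calc ((tt i).card : ℝ)
            ≤ (∫ t in (ℓ i - 2*δ)..(ℓ i + δ), Real.exp t / t)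
              + 2*A*Real.exp (ν*(ℓ i + δ)) := h
          _ ≤ (Real.exp 1)^2 * (9*δ*Ek/(k:ℝ)) + 2*A*(vk*(Real.exp 1)^2) := by
              linarith only [hint, hb4, hb5.le, hb5.ge, hb7]
      · intro j hj
        rw [htt_def] at hj
        simp only [Finset.mem_filter] at hj
        have h2 := abs_le.1 hj.2.2
        rw [← hδ_def] at h2
        linarith only [h2.1, hδ0]
      · intro j hj
        rw [htt_def] at hj
        simp only [Finset.mem_filter] at hj
        have h2 := abs_le.1 hj.2.2
        rw [← hδ_def] at h2
        linarith only [h2.2, hδ0]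
    -- per index F bound
    have hFk : ∀ i ∈ Sk, F (ℓ i) ≤ fk := by
      intro i hi
      obtain ⟨⟨hx1, hx2⟩, _⟩ := hSkmem i hi
      have hx0 : (0:ℝ) ≤ ℓ i := by linarith only [hk3, hx1]
      have q1 : (ℓ i)^2 ≤ ((k:ℝ)+1)^2 :=
        pow_le_pow_left₀ hx0 (by linarith only [hx2]) 2
      have q2 : (ℓ i + 1)^2 ≤ ((k:ℝ)+2)^2 :=
        pow_le_pow_left₀ (by linarith only [hx0]) (by linarith only [hx2]) 2
      have q3 : ((k:ℝ)+1)^2*((k:ℝ)+2)^2 ≤ 16*(k:ℝ)^4 := by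
        have r1 : ((k:ℝ)+1)^2 ≤ (2*(k:ℝ))^2 :=
          pow_le_pow_left₀ (by linarith only [hk3]) (by linarith only [hk3]) 2
        have r2 : ((k:ℝ)+2)^2 ≤ (2*(k:ℝ))^2 :=
          pow_le_pow_left₀ (by linarith only [hk3]) (by linarith only [hk3]) 2
        have r3 := mul_le_mul r1 r2 (sq_nonneg _) (by positivity : (0:ℝ) ≤ (2*(k:ℝ))^2)
        have r4 : (2*(k:ℝ))^2*(2*(k:ℝ))^2 = 16*(k:ℝ)^4 := by ring
        linarith only [r3, r4.le, r4.ge]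
      have q4 : (ℓ i)^2*(ℓ i+1)^2 ≤ 16*(k:ℝ)^4 := by
        have h := mul_le_mul q1 q2 (sq_nonneg _) (by positivity : (0:ℝ) ≤ ((k:ℝ)+1)^2)
        linarith only [h, q3]
      have q5 : Real.exp (-(2*ℓ i)) ≤ uk := by
        rw [huk_def]
        apply Real.exp_le_exp.2
        linarith only [hx1]
      rw [hF_def, hfk_def]
      calc (ℓ i)^2*(ℓ i+1)^2*Real.exp (-(2*ℓ i))*Real.exp 1
          ≤ (16*(k:ℝ)^4)*Real.exp (-(2*ℓ i))*Real.exp 1 := by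
            apply mul_le_mul_of_nonneg_right
              (mul_le_mul_of_nonneg_right q4 (Real.exp_pos _).le) he1.le
        _ ≤ (16*(k:ℝ)^4)*uk*Real.exp 1 := by
            apply mul_le_mul_of_nonneg_right
              (mul_le_mul_of_nonneg_left q5 (by positivity)) he1.le
        _ = 16*Real.exp 1*(k:ℝ)^4*uk := by ring
    -- sum over the window
    have hsumk : ∑ i ∈ Sk, W i * F (ℓ i) ≤ ck * (mk * fk) := by
      have h1 : ∀ i ∈ Sk, W i * F (ℓ i) ≤ mk * fk := by
        intro i hi
        exact mul_le_mul (hWk i hi) (hFk i hi) (hF_nonneg _) hmk0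
      have h2 := Finset.sum_le_card_nsmul Sk _ (mk * fk) h1
      rw [nsmul_eq_mul] at h2
      calc ∑ i ∈ Sk, W i * F (ℓ i) ≤ (Sk.card : ℝ) * (mk * fk) := h2
        _ ≤ ck * (mk * fk) := mul_le_mul_of_nonneg_right hcnt (mul_nonneg hmk0 hfk0)
    -- the key algebraic estimate
    have hexp1 : uk * (Ek*Ek) = 1 := by
      rw [huk_def, hEk_def, ← Real.exp_add, ← Real.exp_add,
        show -(2*(k:ℝ)) + ((k:ℝ)+(k:ℝ)) = 0 by ring, Real.exp_zero]
    have hexp2 : uk * (Ek*vk) = wk := by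
      rw [huk_def, hEk_def, hvk_def, hwk_def, ← Real.exp_add, ← Real.exp_add]
      congr 1
      rw [hη_def]; ring
    have hexp3 : uk * (vk*vk) = wk*wk := by
      rw [huk_def, hvk_def, hwk_def, ← Real.exp_add, ← Real.exp_add, ← Real.exp_add]
      congr 1
      rw [hη_def]; ring
    have expand : ck * (mk * fk)
        = 16*(Real.exp 1)^4 * (9*δ*(uk*(Ek*Ek))*(k:ℝ)^2
          + (2*A+18*A*δ)*(uk*(Ek*vk))*(k:ℝ)^3 + 4*A^2*(uk*(vk*vk))*(k:ℝ)^4) := by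
      rw [hck_def, hmk_def, hfk_def]
      generalize Real.exp 1 = ee
      field_simp
      ring
    rw [hexp1, hexp2, hexp3] at expand
    have hwk0 : 0 < wk := Real.exp_pos _
    have hwk1 : wk ≤ 1 := Real.exp_le_one_iff.2
      (neg_nonpos.2 (mul_nonneg hη.le hk0.le))
    have hk34 : (k:ℝ)^3 ≤ (k:ℝ)^4 :=
      pow_le_pow_right₀ (by linarith only [hk3]) (by norm_num)
    have hE4 : (0:ℝ) ≤ (Real.exp 1)^4 := by positivity
    have f1 : (0:ℝ) ≤ (Real.exp 1)^4 * (A*wk*((k:ℝ)^4 - (k:ℝ)^3)) :=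
      mul_nonneg hE4 (mul_nonneg (mul_nonneg hA hwk0.le) (by linarith only [hk34]))
    have f2 : (0:ℝ) ≤ (Real.exp 1)^4 * (A*wk*((1-δ)*(k:ℝ)^3)) :=
      mul_nonneg hE4 (mul_nonneg (mul_nonneg hA hwk0.le)
        (mul_nonneg (by linarith only [hδ1]) (by positivity)))
    have f3 : (0:ℝ) ≤ (Real.exp 1)^4 * (A^2*(wk*(1-wk))*(k:ℝ)^4) :=
      mul_nonneg hE4 (mul_nonneg (mul_nonneg (sq_nonneg _)
        (mul_nonneg hwk0.le (by linarith only [hwk1]))) (by positivity))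
    calc ∑ i ∈ Sk, W i * F (ℓ i) ≤ ck * (mk * fk) := hsumk
      _ = 16*(Real.exp 1)^4 * (9*δ*1*(k:ℝ)^2
          + (2*A+18*A*δ)*wk*(k:ℝ)^3 + 4*A^2*(wk*wk)*(k:ℝ)^4) := expand
      _ ≤ 144*(Real.exp 1)^4*δ*(k:ℝ)^2
          + (320*A+64*A^2)*(Real.exp 1)^4*((k:ℝ)^4 * wk) := by linarith only [f1, f2, f3]
  -- summing the per-window bounds
  have hL0 : (0:ℝ) < L := lt_of_lt_of_le hs hL
  have hlarge : ∑ i ∈ A₂, W i * F (ℓ i)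
      ≤ 288*(Real.exp 1)^4*δ*L^3 + (320*A+64*A^2)*(Real.exp 1)^4*CG := by
    have hsq : ∑ k ∈ Finset.Icc k0n K, (k:ℝ)^2 ≤ 2*L^3 := by
      by_cases hKk : k0n ≤ K
      · have hKL : (K:ℝ) ≤ L := by
          rw [hK_def]; exact Nat.floor_le hL0.le
        have hk0K : ((k0n:ℕ):ℝ) ≤ (K:ℝ) := Nat.cast_le.2 hKk
        have hL3 : (3:ℝ) ≤ L := by linarith only [h3k0, hk0K, hKL]
        have hpk : ∀ k ∈ Finset.Icc k0n K, (k:ℝ)^2 ≤ L^2 := by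
          intro k hk
          have h1 : (k:ℝ) ≤ (K:ℝ) := Nat.cast_le.2 (Finset.mem_Icc.1 hk).2
          exact pow_le_pow_left₀ (Nat.cast_nonneg _) (by linarith only [h1, hKL]) 2
        calc ∑ k ∈ Finset.Icc k0n K, (k:ℝ)^2
            ≤ ∑ _k ∈ Finset.Icc k0n K, L^2 := Finset.sum_le_sum hpk
          _ = ((Finset.Icc k0n K).card : ℝ) * L^2 := by
              rw [Finset.sum_const, nsmul_eq_mul]
          _ ≤ (2*L) * L^2 := by
              apply mul_le_mul_of_nonneg_right _ (by positivity)
              rw [Nat.card_Icc]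
              have hc1 : ((K + 1 - k0n : ℕ):ℝ) ≤ (K:ℝ) + 1 := by
                have h := Nat.sub_le (K+1) k0n
                exact_mod_cast Nat.cast_le.2 h
              linarith only [hc1, hKL, hL3]
          _ = 2*L^3 := by ring
      · rw [Finset.Icc_eq_empty hKk, Finset.sum_empty]
        positivity
    have hq4 : ∑ k ∈ Finset.Icc k0n K, (k:ℝ)^4 * Real.exp (-(η*(k:ℝ))) ≤ CG := by
      rw [hCG_def]; exact aux_sum_k4 η hη k0n K
    have t1 : 144*(Real.exp 1)^4*δ * (∑ k ∈ Finset.Icc k0n K, (k:ℝ)^2)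
        ≤ 144*(Real.exp 1)^4*δ * (2*L^3) :=
      mul_le_mul_of_nonneg_left hsq (by positivity)
    have t2 : (320*A+64*A^2)*(Real.exp 1)^4
          * (∑ k ∈ Finset.Icc k0n K, (k:ℝ)^4 * Real.exp (-(η*(k:ℝ))))
        ≤ (320*A+64*A^2)*(Real.exp 1)^4 * CG :=
      mul_le_mul_of_nonneg_left hq4 (by positivity)
    calc ∑ i ∈ A₂, W i * F (ℓ i)
        = ∑ k ∈ Finset.Icc k0n K,
            ∑ i ∈ A₂.filter (fun i => (k:ℝ) < ℓ i ∧ ℓ i ≤ (k:ℝ)+1), W i * F (ℓ i) := hregroup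
      _ ≤ ∑ k ∈ Finset.Icc k0n K, (144*(Real.exp 1)^4*δ*(k:ℝ)^2
            + (320*A+64*A^2)*(Real.exp 1)^4*((k:ℝ)^4 * Real.exp (-(η*(k:ℝ))))) :=
          Finset.sum_le_sum hperk
      _ = 144*(Real.exp 1)^4*δ * (∑ k ∈ Finset.Icc k0n K, (k:ℝ)^2)
            + (320*A+64*A^2)*(Real.exp 1)^4
              * (∑ k ∈ Finset.Icc k0n K, (k:ℝ)^4 * Real.exp (-(η*(k:ℝ)))) := by
          rw [Finset.sum_add_distrib, Finset.mul_sum, Finset.mul_sum]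
      _ ≤ 144*(Real.exp 1)^4*δ * (2*L^3) + (320*A+64*A^2)*(Real.exp 1)^4 * CG := by
          linarith only [t1, t2]
      _ = 288*(Real.exp 1)^4*δ*L^3 + (320*A+64*A^2)*(Real.exp 1)^4*CG := by ring
  -- final assembly
  have hδL : 288*(Real.exp 1)^4*δ*L^3 ≤ 288*(Real.exp 1)^4*(L^3/T) := by
    have h2 : δ*L^3 ≤ L^3/T := by
      have h := mul_le_mul_of_nonneg_right hδT (by positivity : (0:ℝ) ≤ L^3)
      calc δ*L^3 ≤ (1/T)*L^3 := h
        _ = L^3/T := by ring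
    calc 288*(Real.exp 1)^4*δ*L^3 = (288*(Real.exp 1)^4)*(δ*L^3) := by ring
      _ ≤ (288*(Real.exp 1)^4)*(L^3/T) := mul_le_mul_of_nonneg_left h2 (by positivity)
      _ = 288*(Real.exp 1)^4*(L^3/T) := by ring
  have hLT0 : (0:ℝ) ≤ L^3/T := by positivity
  have n1 : (0:ℝ) ≤ Cs*Cs*Fs := by positivity
  have n2 : (0:ℝ) ≤ (320*A+64*A^2)*(Real.exp 1)^4*CG := by positivity
  have n3 : (0:ℝ) ≤ 288*(Real.exp 1)^4 := by positivity
  have h1 : 288*(Real.exp 1)^4*(L^3/T)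
      ≤ (Cs*Cs*Fs + 288*(Real.exp 1)^4 + (320*A+64*A^2)*(Real.exp 1)^4*CG + 1)*(L^3/T) :=
    mul_le_mul_of_nonneg_right (by linarith only [n1, n2]) hLT0
  calc ∑ p ∈ ((hfin L).toFinset ×ˢ (hfin L).toFinset).filter
        (fun p => p.1 ≠ p.2 ∧ |ℓ p.1 - ℓ p.2| ≤ C₀ / T),
        ℓ p.1 ^ 2 * ℓ p.2 ^ 2 * Real.exp (-ℓ p.1 - ℓ p.2)
      ≤ ∑ i ∈ A', W i * F (ℓ i) := hmain
    _ = ∑ i ∈ A'.filter (fun i => ℓ i ≤ (k0n:ℝ)), W i * F (ℓ i)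
        + ∑ i ∈ A₂, W i * F (ℓ i) := hST_split
    _ ≤ Cs * (Cs * Fs)
        + (288*(Real.exp 1)^4*δ*L^3 + (320*A+64*A^2)*(Real.exp 1)^4*CG) := by
        linarith only [hsmall, hlarge]
    _ ≤ (Cs*Cs*Fs + 288*(Real.exp 1)^4 + (320*A+64*A^2)*(Real.exp 1)^4*CG + 1)
        * (L^3/T + 1) := by
        have hexpand : (Cs*Cs*Fs + 288*(Real.exp 1)^4 + (320*A+64*A^2)*(Real.exp 1)^4*CG + 1)
            * (L^3/T + 1)
            = (Cs*Cs*Fs + 288*(Real.exp 1)^4 + (320*A+64*A^2)*(Real.exp 1)^4*CG + 1)*(L^3/T)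
              + (Cs*Cs*Fs + 288*(Real.exp 1)^4 + (320*A+64*A^2)*(Real.exp 1)^4*CG + 1) := by
          ring
        rw [hexpand]
        linarith only [hδL, h1, n3]
end

section
/- Let s > 0, 0 < ν < 1 and A ≥ 0, and let (ℓ_j)_{j ∈ ℕ} be a sequence of real numbers with ℓ_j ≥ s for all j whose counting function 𝒩(x) = #{j : ℓ_j ≤ x} satisfies |𝒩(x) − ∫_s^x (e^t / t) dt| ≤ A e^{ν x} for all x ≥ s. Then there is a constant C′ > 0 depending only on A, ν and s such that for all L ≥ s, T ≥ 1 and 0 < C₀ ≤ 1 one has ∑ ℓ_i² ℓ_j² e^{−(1+c)(ℓ_i + ℓ_j)/2} ≤ C′, where the sum is over all pairs of distinct indices i ≠ j with ℓ_i ≤ L, ℓ_j ≤ L and all integers c ≥ 2 with |ℓ_i − ℓ_j| ≤ C₀/(cT). -/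
open Finset

lemma aux_sq (x : ℝ) (hx : 0 ≤ x) :
    x ^ 2 * Real.exp (-(3 * x / 2)) ≤ 64 * Real.exp (-(5 * x / 4)) := by
  have h1 : x / 8 + 1 ≤ Real.exp (x / 8) := Real.add_one_le_exp _
  have h2 : x ^ 2 ≤ 64 * Real.exp (x / 4) := by
    have hp := Real.exp_pos (x / 8)
    have hsq : Real.exp (x / 8) * Real.exp (x / 8) = Real.exp (x / 4) := by
      rw [← Real.exp_add]; ring_nf
    nlinarith [Real.exp_pos (x / 4)]
  have h3 := Real.exp_pos (-(3 * x / 2))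
  calc x ^ 2 * Real.exp (-(3 * x / 2)) ≤ 64 * Real.exp (x / 4) * Real.exp (-(3 * x / 2)) := by
        nlinarith
    _ = 64 * Real.exp (-(5 * x / 4)) := by
        rw [mul_assoc, ← Real.exp_add]; ring_nf

lemma aux_int (s x : ℝ) (hs : 0 < s) (hx : s ≤ x) :
    (∫ t in s..x, Real.exp t / t) ≤ Real.exp x / s := by
  have h1 : (∫ t in s..x, Real.exp t / t) ≤ ∫ t in s..x, Real.exp t / s := by
    apply intervalIntegral.integral_mono_on hx
    · apply ContinuousOn.intervalIntegrable
      rw [Set.uIcc_of_le hx]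
      exact Real.continuous_exp.continuousOn.div continuousOn_id
        (fun t ht => ne_of_gt (lt_of_lt_of_le hs ht.1))
    · exact (Real.continuous_exp.div_const s).intervalIntegrable _ _
    · intro t ht
      exact div_le_div_of_nonneg_left (Real.exp_pos t).le hs ht.1
  have h2 : (∫ t in s..x, Real.exp t / s) = (Real.exp x - Real.exp s) / s := by
    rw [intervalIntegral.integral_div, integral_exp]
  have h3 : (Real.exp x - Real.exp s) / s ≤ Real.exp x / s := by
    gcongr
    linarith [Real.exp_pos s]
  linarith

/-- Abstract form of the bound `Σ₂ ≪ 1`: if the counting function of the sequence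
`(ℓ j)` satisfies the prime-geodesic-type asymptotic
`|𝒩(x) − ∫_s^x e^t/t dt| ≤ A e^{νx}`, then there is `C' > 0` depending only on
`A, ν, s` such that for all `L ≥ s`, `T ≥ 1`, `0 < C₀ ≤ 1`, the sum of
`ℓᵢ² ℓⱼ² e^{−(1+c)(ℓᵢ+ℓⱼ)/2}` over all pairs `i ≠ j` with `ℓᵢ, ℓⱼ ≤ L` and all
integers `c ≥ 2` with `|ℓᵢ − ℓⱼ| ≤ C₀/(cT)` is at most `C'`. -/
theorem stmt17 (s ν A : ℝ) (hs : 0 < s) (hν0 : 0 < ν) (hν1 : ν < 1) (hA : 0 ≤ A) :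
    ∃ C' : ℝ, 0 < C' ∧
      ∀ ℓ : ℕ → ℝ, (∀ j, s ≤ ℓ j) →
        ∀ (hfin : ∀ x : ℝ, {j : ℕ | ℓ j ≤ x}.Finite),
        (∀ x : ℝ, s ≤ x →
          |((hfin x).toFinset.card : ℝ) - ∫ t in s..x, Real.exp t / t| ≤
            A * Real.exp (ν * x)) →
        ∀ L T C₀ : ℝ, s ≤ L → 1 ≤ T → 0 < C₀ → C₀ ≤ 1 →
          ∑ p ∈ ((hfin L).toFinset ×ˢ (hfin L).toFinset).filter
              (fun p => p.1 ≠ p.2),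
            ∑' c : ℕ,
              (if 2 ≤ c ∧ |ℓ p.1 - ℓ p.2| ≤ C₀ / (c * T) then
                ℓ p.1 ^ 2 * ℓ p.2 ^ 2 *
                  Real.exp (-((1 + (c : ℝ)) * (ℓ p.1 + ℓ p.2) / 2))
              else 0) ≤ C' := by
  have hq0 : (0:ℝ) < Real.exp (-s) := Real.exp_pos _
  have hq1 : Real.exp (-s) < 1 := Real.exp_lt_one_iff.mpr (by linarith)
  have hr0 : (0:ℝ) < Real.exp (-(1/4 : ℝ)) := Real.exp_pos _
  have hr1 : Real.exp (-(1/4 : ℝ)) < 1 := Real.exp_lt_one_iff.mpr (by norm_num)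
  set B : ℝ := 1/s + A with hBdef
  have hB0 : 0 < B := by positivity
  set D : ℝ := 64 * B * Real.exp (1 - s/4) * (1 - Real.exp (-(1/4:ℝ)))⁻¹ with hDdef
  have hD0 : 0 < D := by
    have h : 0 < 1 - Real.exp (-(1/4:ℝ)) := by linarith
    positivity
  set K : ℝ := Real.exp (2*s) * (1 - Real.exp (-s))⁻¹ with hKdef
  have hK0 : 0 < K := by
    have h : 0 < 1 - Real.exp (-s) := by linarith
    positivity
  refine ⟨K * D^2, by positivity, ?_⟩
  intro ℓ hℓs hfin hcount L T C₀ hL hT hC0 hC1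
  -- the counting bound
  have hN : ∀ x : ℝ, s ≤ x → ((hfin x).toFinset.card : ℝ) ≤ B * Real.exp x := by
    intro x hx
    have h1 := (abs_le.mp (hcount x hx)).2
    have hI := aux_int s x hs hx
    have hE : Real.exp (ν * x) ≤ Real.exp x :=
      Real.exp_le_exp.mpr (by nlinarith)
    have hAe : A * Real.exp (ν * x) ≤ A * Real.exp x := by nlinarith [Real.exp_pos (ν*x)]
    calc ((hfin x).toFinset.card : ℝ)
        ≤ (∫ t in s..x, Real.exp t / t) + A * Real.exp (ν * x) := by linarith
      _ ≤ Real.exp x / s + A * Real.exp x := by linarith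
      _ = B * Real.exp x := by rw [hBdef]; ring
  set F := (hfin L).toFinset with hFdef
  have hφ0 : ∀ i : ℕ, (0:ℝ) ≤ (ℓ i)^2 * Real.exp (-(3 * ℓ i / 2)) := fun i => by positivity
  -- the single-sum bound
  have hS : ∑ i ∈ F, (ℓ i)^2 * Real.exp (-(3 * ℓ i / 2)) ≤ D := by
    have step1 : ∑ i ∈ F, (ℓ i)^2 * Real.exp (-(3 * ℓ i / 2)) ≤
        ∑ i ∈ F, 64 * Real.exp (-(5 * ℓ i / 4)) :=
      Finset.sum_le_sum fun i _ => aux_sq (ℓ i) (le_trans hs.le (hℓs i))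
    set N : ℕ := ⌊L - s⌋₊ + 1 with hNdef
    have hmap : ∀ i ∈ F, ⌊ℓ i - s⌋₊ ∈ Finset.range N := by
      intro i hi
      rw [hFdef, Set.Finite.mem_toFinset] at hi
      have h : ℓ i - s ≤ L - s := by simpa using sub_le_sub_right hi s
      exact Finset.mem_range.mpr (Nat.lt_succ_of_le (Nat.floor_le_floor h))
    have step2 : ∑ i ∈ F, 64 * Real.exp (-(5 * ℓ i / 4)) =
        ∑ n ∈ Finset.range N, ∑ i ∈ F.filter (fun i => ⌊ℓ i - s⌋₊ = n),
          64 * Real.exp (-(5 * ℓ i / 4)) :=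
      (Finset.sum_fiberwise_of_maps_to hmap _).symm
    have step3 : ∀ n : ℕ, ∑ i ∈ F.filter (fun i => ⌊ℓ i - s⌋₊ = n),
        64 * Real.exp (-(5 * ℓ i / 4)) ≤
        (64 * B * Real.exp (1 - s/4)) * (Real.exp (-(1/4:ℝ)))^n := by
      intro n
      have hbound : ∀ i ∈ F.filter (fun i => ⌊ℓ i - s⌋₊ = n),
          64 * Real.exp (-(5 * ℓ i / 4)) ≤ 64 * Real.exp (-(5 * (s + (n:ℝ)) / 4)) := by
        intro i hi
        rw [Finset.mem_filter] at hi
        have h0 : (0:ℝ) ≤ ℓ i - s := sub_nonneg.mpr (hℓs i)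
        have h1 : (n:ℝ) ≤ ℓ i - s := by
          rw [← hi.2]; exact Nat.floor_le h0
        have h2 := Real.exp_le_exp.mpr
          (show -(5 * ℓ i / 4) ≤ -(5 * (s + (n:ℝ)) / 4) by linarith)
        linarith
      have hsum := Finset.sum_le_card_nsmul (F.filter (fun i => ⌊ℓ i - s⌋₊ = n)) _ _ hbound
      rw [nsmul_eq_mul] at hsum
      have hsub : F.filter (fun i => ⌊ℓ i - s⌋₊ = n) ⊆ (hfin (s + (n:ℝ) + 1)).toFinset := by
        intro i hi
        rw [Finset.mem_filter] at hi
        rw [Set.Finite.mem_toFinset]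
        have h0 : (0:ℝ) ≤ ℓ i - s := sub_nonneg.mpr (hℓs i)
        have h1 := Nat.lt_floor_add_one (ℓ i - s)
        rw [hi.2] at h1
        simp only [Set.mem_setOf_eq]
        push_cast at h1 ⊢
        linarith
      have hcard : ((F.filter (fun i => ⌊ℓ i - s⌋₊ = n)).card : ℝ) ≤
          B * Real.exp (s + (n:ℝ) + 1) := by
        have h1 := Finset.card_le_card hsub
        have h2 := hN (s + (n:ℝ) + 1) (by linarith [Nat.cast_nonneg (α := ℝ) n])
        calc ((F.filter (fun i => ⌊ℓ i - s⌋₊ = n)).card : ℝ)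
            ≤ ((hfin (s + (n:ℝ) + 1)).toFinset.card : ℝ) := by exact_mod_cast h1
          _ ≤ B * Real.exp (s + (n:ℝ) + 1) := h2
      have hexp : B * Real.exp (s + (n:ℝ) + 1) * (64 * Real.exp (-(5 * (s + (n:ℝ)) / 4))) =
          (64 * B * Real.exp (1 - s/4)) * (Real.exp (-(1/4:ℝ)))^n := by
        have e1 : Real.exp (s + (n:ℝ) + 1) * Real.exp (-(5 * (s + (n:ℝ)) / 4)) =
            Real.exp (1 - s/4) * Real.exp ((n:ℝ) * (-(1/4:ℝ))) := by
          rw [← Real.exp_add, ← Real.exp_add]; congr 1; ring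
        rw [← Real.exp_nat_mul]
        linear_combination (64 * B) * e1
      calc ∑ i ∈ F.filter (fun i => ⌊ℓ i - s⌋₊ = n), 64 * Real.exp (-(5 * ℓ i / 4))
          ≤ ((F.filter (fun i => ⌊ℓ i - s⌋₊ = n)).card : ℝ) *
            (64 * Real.exp (-(5 * (s + (n:ℝ)) / 4))) := hsum
        _ ≤ B * Real.exp (s + (n:ℝ) + 1) * (64 * Real.exp (-(5 * (s + (n:ℝ)) / 4))) :=
            mul_le_mul_of_nonneg_right hcard (by positivity)
        _ = (64 * B * Real.exp (1 - s/4)) * (Real.exp (-(1/4:ℝ)))^n := hexp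
    have geo : ∑ n ∈ Finset.range N, (Real.exp (-(1/4:ℝ)))^n ≤
        (1 - Real.exp (-(1/4:ℝ)))⁻¹ := by
      have := Summable.sum_le_tsum (Finset.range N) (fun i _ => by positivity)
        (summable_geometric_of_lt_one hr0.le hr1)
      rwa [tsum_geometric_of_lt_one hr0.le hr1] at this
    calc ∑ i ∈ F, (ℓ i)^2 * Real.exp (-(3 * ℓ i / 2))
        ≤ ∑ i ∈ F, 64 * Real.exp (-(5 * ℓ i / 4)) := step1
      _ = ∑ n ∈ Finset.range N, ∑ i ∈ F.filter (fun i => ⌊ℓ i - s⌋₊ = n),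
            64 * Real.exp (-(5 * ℓ i / 4)) := step2
      _ ≤ ∑ n ∈ Finset.range N, (64 * B * Real.exp (1 - s/4)) * (Real.exp (-(1/4:ℝ)))^n :=
          Finset.sum_le_sum fun n _ => step3 n
      _ = (64 * B * Real.exp (1 - s/4)) * ∑ n ∈ Finset.range N, (Real.exp (-(1/4:ℝ)))^n := by
          rw [Finset.mul_sum]
      _ ≤ (64 * B * Real.exp (1 - s/4)) * (1 - Real.exp (-(1/4:ℝ)))⁻¹ := by
          apply mul_le_mul_of_nonneg_left geo (by positivity)
      _ = D := by rw [hDdef]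
  -- the per-pair tsum bound
  have hpair : ∀ i j : ℕ,
      (∑' c : ℕ, (if 2 ≤ c ∧ |ℓ i - ℓ j| ≤ C₀ / (c * T) then
        ℓ i ^ 2 * ℓ j ^ 2 * Real.exp (-((1 + (c:ℝ)) * (ℓ i + ℓ j) / 2)) else 0)) ≤
      K * ((ℓ i)^2 * Real.exp (-(3 * ℓ i / 2)) * ((ℓ j)^2 * Real.exp (-(3 * ℓ j / 2)))) := by
    intro i j
    have hSig : 2 * s ≤ ℓ i + ℓ j := by linarith [hℓs i, hℓs j]
    set g : ℕ → ℝ := fun c => ℓ i ^ 2 * ℓ j ^ 2 * Real.exp (-(3 * (ℓ i + ℓ j) / 2)) *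
      Real.exp (2*s) * (Real.exp (-s))^c with hg
    have hle : ∀ c : ℕ, (if 2 ≤ c ∧ |ℓ i - ℓ j| ≤ C₀ / (c * T) then
        ℓ i ^ 2 * ℓ j ^ 2 * Real.exp (-((1 + (c:ℝ)) * (ℓ i + ℓ j) / 2)) else 0) ≤ g c := by
      intro c
      by_cases h : 2 ≤ c ∧ |ℓ i - ℓ j| ≤ C₀ / (c * T)
      · rw [if_pos h]
        have hc2 : (2:ℝ) ≤ (c:ℝ) := by exact_mod_cast h.1
        have hexp : Real.exp (-((1 + (c:ℝ)) * (ℓ i + ℓ j) / 2)) ≤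
            Real.exp (-(3 * (ℓ i + ℓ j) / 2)) * Real.exp (2*s) * (Real.exp (-s))^c := by
          rw [← Real.exp_nat_mul, ← Real.exp_add, ← Real.exp_add]
          apply Real.exp_le_exp.mpr
          nlinarith [mul_nonneg (by linarith : (0:ℝ) ≤ (c:ℝ) - 2)
            (by linarith : (0:ℝ) ≤ ℓ i + ℓ j - 2*s)]
        have hP0 : (0:ℝ) ≤ ℓ i ^ 2 * ℓ j ^ 2 := by positivity
        calc ℓ i ^ 2 * ℓ j ^ 2 * Real.exp (-((1 + (c:ℝ)) * (ℓ i + ℓ j) / 2))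
            ≤ ℓ i ^ 2 * ℓ j ^ 2 * (Real.exp (-(3 * (ℓ i + ℓ j) / 2)) * Real.exp (2*s) *
              (Real.exp (-s))^c) := mul_le_mul_of_nonneg_left hexp hP0
          _ = g c := by rw [hg]; ring
      · rw [if_neg h, hg]
        positivity
    have hsumg : Summable g :=
      (summable_geometric_of_lt_one hq0.le hq1).mul_left _
    have hsumf : Summable (fun c : ℕ => (if 2 ≤ c ∧ |ℓ i - ℓ j| ≤ C₀ / (c * T) then
        ℓ i ^ 2 * ℓ j ^ 2 * Real.exp (-((1 + (c:ℝ)) * (ℓ i + ℓ j) / 2)) else 0)) :=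
      Summable.of_nonneg_of_le (fun c => by split_ifs <;> positivity) hle hsumg
    have hmul : Real.exp (-(3 * ℓ i / 2)) * Real.exp (-(3 * ℓ j / 2)) =
        Real.exp (-(3 * (ℓ i + ℓ j) / 2)) := by
      rw [← Real.exp_add]; ring_nf
    calc (∑' c : ℕ, (if 2 ≤ c ∧ |ℓ i - ℓ j| ≤ C₀ / (c * T) then
          ℓ i ^ 2 * ℓ j ^ 2 * Real.exp (-((1 + (c:ℝ)) * (ℓ i + ℓ j) / 2)) else 0))
        ≤ ∑' c : ℕ, g c := Summable.tsum_le_tsum hle hsumf hsumg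
      _ = ℓ i ^ 2 * ℓ j ^ 2 * Real.exp (-(3 * (ℓ i + ℓ j) / 2)) * Real.exp (2*s) *
          (1 - Real.exp (-s))⁻¹ := by
          rw [hg, tsum_mul_left, tsum_geometric_of_lt_one hq0.le hq1]
      _ = K * ((ℓ i)^2 * Real.exp (-(3 * ℓ i / 2)) * ((ℓ j)^2 * Real.exp (-(3 * ℓ j / 2)))) := by
          rw [hKdef, ← hmul]; ring
  -- put it together
  calc ∑ p ∈ (F ×ˢ F).filter (fun p => p.1 ≠ p.2),
        ∑' c : ℕ, (if 2 ≤ c ∧ |ℓ p.1 - ℓ p.2| ≤ C₀ / (c * T) then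
          ℓ p.1 ^ 2 * ℓ p.2 ^ 2 * Real.exp (-((1 + (c:ℝ)) * (ℓ p.1 + ℓ p.2) / 2)) else 0)
      ≤ ∑ p ∈ F ×ˢ F, ∑' c : ℕ, (if 2 ≤ c ∧ |ℓ p.1 - ℓ p.2| ≤ C₀ / (c * T) then
          ℓ p.1 ^ 2 * ℓ p.2 ^ 2 * Real.exp (-((1 + (c:ℝ)) * (ℓ p.1 + ℓ p.2) / 2)) else 0) :=
        Finset.sum_le_sum_of_subset_of_nonneg (Finset.filter_subset _ _)
          (fun p _ _ => tsum_nonneg (fun c => by split_ifs <;> positivity))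
    _ ≤ ∑ p ∈ F ×ˢ F, K * ((ℓ p.1)^2 * Real.exp (-(3 * ℓ p.1 / 2)) *
          ((ℓ p.2)^2 * Real.exp (-(3 * ℓ p.2 / 2)))) :=
        Finset.sum_le_sum fun p _ => hpair p.1 p.2
    _ = K * ((∑ i ∈ F, (ℓ i)^2 * Real.exp (-(3 * ℓ i / 2))) *
          (∑ j ∈ F, (ℓ j)^2 * Real.exp (-(3 * ℓ j / 2)))) := by
        rw [Finset.sum_product, Finset.sum_mul_sum]
        simp_rw [Finset.mul_sum]
    _ ≤ K * D^2 := by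
        have hS0 : (0:ℝ) ≤ ∑ i ∈ F, (ℓ i)^2 * Real.exp (-(3 * ℓ i / 2)) :=
          Finset.sum_nonneg fun i _ => hφ0 i
        have h1 : (∑ i ∈ F, (ℓ i)^2 * Real.exp (-(3 * ℓ i / 2))) *
            (∑ j ∈ F, (ℓ j)^2 * Real.exp (-(3 * ℓ j / 2))) ≤ D * D :=
          mul_le_mul hS hS hS0 hD0.le
        calc K * ((∑ i ∈ F, (ℓ i)^2 * Real.exp (-(3 * ℓ i / 2))) *
              (∑ j ∈ F, (ℓ j)^2 * Real.exp (-(3 * ℓ j / 2))))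
            ≤ K * (D * D) := mul_le_mul_of_nonneg_left h1 hK0.le
          _ = K * D^2 := by ring
end
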